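/- arXiv:2601.23008 — 11 statements merged into one kernel-verified Lean document; each statement's English description precedes it below -/
import Mathlib

section
/- Every locally complete locally convex space E has the property (MK): every Mackey null sequence in E is a K-sequence. -/
open Filter Topology
open Pointwise

section Defs

variable {E : Type*} [AddCommGroup E] [Module ℝ E] [TopologicalSpace E]

/-- A sequence is a K-sequence if every subsequence contains a further subsequence
whose series converges. -/
def IsKSequence (x : ℕ → E) : Prop :=
  ∀ φ : ℕ → ℕ, StrictMono φ → ∃ ψ : ℕ → ℕ, StrictMono ψ ∧
    ∃ s : E, Tendsto (fun N => ∑ k ∈ Finset.range N, x (φ (ψ k))) atTop (𝓝 s)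

/-- A sequence is Mackey null if `a n • x n → 0` for some increasing unbounded
sequence of positive reals. -/
def IsMackeyNull (x : ℕ → E) : Prop :=
  ∃ a : ℕ → ℝ, (∀ n, 0 < a n) ∧ Monotone a ∧ Tendsto a atTop atTop ∧
    Tendsto (fun n => a n • x n) atTop (𝓝 (0 : E))

variable (E) in
/-- Property (K): every null sequence is a K-sequence. -/
def PropertyK : Prop :=
  ∀ x : ℕ → E, Tendsto x atTop (𝓝 (0 : E)) → IsKSequence x

variable (E) in
/-- Property (MK): every Mackey null sequence is a K-sequence. -/
def PropertyMK : Prop :=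
  ∀ x : ℕ → E, IsMackeyNull x → IsKSequence x

variable (E) in
/-- A tvs is feral if every von Neumann bounded subset spans a
finite-dimensional subspace. -/
def Feral : Prop :=
  ∀ s : Set E, Bornology.IsVonNBounded ℝ s → FiniteDimensional ℝ (Submodule.span ℝ s)

variable (E) in
/-- Local completeness: the closed absolutely convex hull of any null sequence is compact. -/
def LocallyCompleteLCS : Prop :=
  ∀ x : ℕ → E, Tendsto x atTop (𝓝 (0 : E)) →
    IsCompact (closure (convexHull ℝ (balancedHull ℝ (Set.range x))))

end Defs

/-- A space is κ-Fréchet–Urysohn if every point in the closure of an open set is a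
limit of a sequence from that open set. -/
def KappaFrechetUrysohn (X : Type*) [TopologicalSpace X] : Prop :=
  ∀ U : Set X, IsOpen U → ∀ x ∈ closure U, ∃ u : ℕ → X, (∀ n, u n ∈ U) ∧ Tendsto u atTop (𝓝 x)


section Aux
variable {E : Type*} [AddCommGroup E] [Module ℝ E]

lemma aux_subconvex {A : Set E} (hA : Convex ℝ A) (h0 : (0:E) ∈ A)
    (F : Finset ℕ) (c : ℕ → ℝ) (z : ℕ → E) (hc : ∀ k ∈ F, 0 ≤ c k)
    (hz : ∀ k ∈ F, z k ∈ A) (hsum : ∑ k ∈ F, c k ≤ 1) :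
    ∑ k ∈ F, c k • z k ∈ A := by
  set u := ∑ k ∈ F, c k with hu
  have hu0 : 0 ≤ u := Finset.sum_nonneg hc
  rcases eq_or_lt_of_le hu0 with h | h
  · have hall : ∀ k ∈ F, c k = 0 := (Finset.sum_eq_zero_iff_of_nonneg hc).1 h.symm
    have hz0 : ∑ k ∈ F, c k • z k = 0 :=
      Finset.sum_eq_zero fun k hk => by rw [hall k hk, zero_smul]
    rw [hz0]; exact h0
  · have hmem : ∑ k ∈ F, (c k / u) • z k ∈ A := by
      apply hA.sum_mem (fun k hk => div_nonneg (hc k hk) hu0) _ hz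
      rw [← Finset.sum_div, ← hu, div_self h.ne']
    have heq : ∑ k ∈ F, c k • z k = u • ∑ k ∈ F, (c k / u) • z k := by
      rw [Finset.smul_sum]
      exact Finset.sum_congr rfl fun k hk => by
        rw [smul_smul, mul_comm, div_mul_cancel₀ _ h.ne']
    rw [heq]
    exact hA.smul_mem_of_zero_mem h0 hmem ⟨hu0, hsum⟩

lemma aux_geom (m : ℕ) : ∀ n, ∑ k ∈ Finset.Ico m n, ((1:ℝ)/2)^(k+1) ≤ (1/2)^m := by
  intro n
  rcases le_or_gt m n with h | h
  · have key : ∀ n, m ≤ n → ∑ k ∈ Finset.Ico m n, ((1:ℝ)/2)^(k+1) = (1/2)^m - (1/2)^n := by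
      intro n hn
      induction n, hn using Nat.le_induction with
      | base => simp
      | succ n hn ih =>
        rw [Finset.sum_Ico_succ_top hn, ih, pow_succ]
        ring
    rw [key n h]
    have : (0:ℝ) ≤ (1/2)^n := by positivity
    linarith
  · rw [Finset.Ico_eq_empty (by omega)]
    simp only [Finset.sum_empty]
    positivity
end Aux

lemma aux_bounded {E : Type*} [AddCommGroup E] [Module ℝ E] [TopologicalSpace E]
    [IsTopologicalAddGroup E] [ContinuousSMul ℝ E] {K : Set E} (hK : IsCompact K) :
    Bornology.IsVonNBounded ℝ K := by
  letI : UniformSpace E := IsTopologicalAddGroup.rightUniformSpace E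
  haveI : IsUniformAddGroup E := isUniformAddGroup_of_addCommGroup
  exact hK.totallyBounded.isVonNBounded ℝ

theorem stmt2' {E : Type*} [AddCommGroup E] [Module ℝ E] [TopologicalSpace E]
    [IsTopologicalAddGroup E] [ContinuousSMul ℝ E] [LocallyConvexSpace ℝ E]
    (hE : ∀ x : ℕ → E, Tendsto x atTop (𝓝 (0 : E)) →
      IsCompact (closure (convexHull ℝ (balancedHull ℝ (Set.range x))))) :
    ∀ x : ℕ → E,
      (∃ a : ℕ → ℝ, (∀ n, 0 < a n) ∧ Monotone a ∧ Tendsto a atTop atTop ∧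
        Tendsto (fun n => a n • x n) atTop (𝓝 (0 : E))) →
      ∀ φ : ℕ → ℕ, StrictMono φ → ∃ ψ : ℕ → ℕ, StrictMono ψ ∧
        ∃ s : E, Tendsto (fun N => ∑ k ∈ Finset.range N, x (φ (ψ k))) atTop (𝓝 s) := by
  intro x ⟨a, hapos, hamono, hatop, hynull⟩ φ hφ
  set y : ℕ → E := fun n => a n • x n with hy
  set A : Set E := convexHull ℝ (balancedHull ℝ (Set.range y)) with hA
  have hconv : Convex ℝ A := convex_convexHull ℝ _
  have hbal : Balanced ℝ A := (balancedHull.balanced _).convexHull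
  have hyA : ∀ n, y n ∈ A := fun n =>
    subset_convexHull ℝ _ (subset_balancedHull ℝ ⟨n, rfl⟩)
  have h0A : (0:E) ∈ A := by
    have := hbal.smul_mem (a := (0:ℝ)) (by simp) (hyA 0)
    simpa using this
  have hK : IsCompact (closure A) := hE y hynull
  obtain ⟨ψ, hψ, hψ2⟩ := extraction_forall_of_eventually'
    (P := fun k j => (2:ℝ)^(k+1) ≤ a (φ j))
    (fun k => ((hatop.comp hφ.tendsto_atTop).eventually_ge_atTop ((2:ℝ)^(k+1))).exists_forall_of_atTop)
  refine ⟨ψ, hψ, ?_⟩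
  set c : ℕ → ℝ := fun k => (a (φ (ψ k)))⁻¹ with hc
  have hcpos : ∀ k, 0 < c k := fun k => inv_pos.2 (hapos _)
  have hcle : ∀ k, c k ≤ (1/2)^(k+1) := by
    intro k
    rw [one_div, inv_pow]
    exact inv_anti₀ (by positivity) (by simpa using hψ2 k)
  have hxc : ∀ k, x (φ (ψ k)) = c k • y (φ (ψ k)) := fun k => by
    rw [hc, hy]; simp [inv_smul_smul₀ (hapos (φ (ψ k))).ne']
  set S : ℕ → E := fun N => ∑ k ∈ Finset.range N, x (φ (ψ k)) with hS
  have hsum : ∀ m n, m ≤ n → S n - S m ∈ ((1:ℝ)/2)^m • A := by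
    intro m n hmn
    have hdiff : S n - S m = ∑ k ∈ Finset.Ico m n, c k • y (φ (ψ k)) := by
      rw [hS]
      rw [← Finset.sum_Ico_eq_sub _ hmn]
      exact Finset.sum_congr rfl fun k _ => hxc k
    rw [hdiff]
    refine Set.mem_smul_set.2 ⟨∑ k ∈ Finset.Ico m n, ((2:ℝ)^m * c k) • y (φ (ψ k)), ?_, ?_⟩
    · apply aux_subconvex hconv h0A _ _ _
        (fun k _ => mul_nonneg (by positivity) (hcpos k).le) (fun k _ => hyA _)
      rw [← Finset.mul_sum]
      calc (2:ℝ)^m * ∑ k ∈ Finset.Ico m n, c k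
          ≤ (2:ℝ)^m * (1/2)^m := by
            apply mul_le_mul_of_nonneg_left _ (by positivity)
            exact le_trans (Finset.sum_le_sum fun k _ => hcle k) (aux_geom m n)
        _ = 1 := by rw [← mul_pow]; norm_num
    · rw [Finset.smul_sum]
      exact Finset.sum_congr rfl fun k _ => by
        rw [smul_smul, ← mul_assoc, ← mul_pow]
        norm_num
  have hSK : ∀ n, S n ∈ closure A := by
    intro n
    have h1 := hsum 0 n (Nat.zero_le n)
    simp only [pow_zero, one_smul] at h1
    have h2 : S n - S 0 ∈ A := h1
    have h3 : S 0 = 0 := by simp [hS]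
    rw [h3, sub_zero] at h2
    exact subset_closure h2
  haveI hne : (Filter.map S atTop).NeBot := map_neBot
  obtain ⟨s, -, hs⟩ := hK (f := Filter.map S atTop)
    (le_principal_iff.2 (Filter.mem_map.2 (Filter.univ_mem' hSK)))
  refine ⟨s, ?_⟩
  have hbdd : Bornology.IsVonNBounded ℝ (closure A) := aux_bounded hK
  have hsmall : ∀ W ∈ 𝓝 (0:E), ∃ m : ℕ, ((1:ℝ)/2)^m • A ⊆ W := by
    intro W hW
    obtain ⟨r, hr⟩ := absorbs_iff_norm.1 (hbdd hW)
    obtain ⟨m, hm⟩ := pow_unbounded_of_one_lt (max r 1) (y := (2:ℝ)) one_lt_two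
    refine ⟨m, ?_⟩
    have h2 : closure A ⊆ (2:ℝ)^m • W := by
      apply hr
      rw [Real.norm_eq_abs, abs_of_pos (by positivity)]
      exact le_trans (le_max_left _ _) hm.le
    intro v hv
    obtain ⟨w, hw, rfl⟩ := hv
    obtain ⟨w', hw', rfl⟩ := h2 (subset_closure hw)
    have hww : ((1:ℝ)/2)^m • (2:ℝ)^m • w' = w' := by
      rw [smul_smul, ← mul_pow]; norm_num
    simpa [hww] using hw'
  rw [tendsto_atTop']
  intro V hV
  have hV0 : {v : E | s + v ∈ V} ∈ 𝓝 (0:E) := by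
    exact (continuous_const.add continuous_id).continuousAt.preimage_mem_nhds
      (by simpa using hV)
  obtain ⟨W1, hW1, hW1sub⟩ := exists_nhds_zero_half hV0
  obtain ⟨W, hW, hWsub⟩ := exists_nhds_zero_half hW1
  have hWW : ∀ u v w : E, u ∈ W → v ∈ W → w ∈ W → s + (u + v + w) ∈ V := by
    intro u v w hu hv hw
    have h1 : u + v ∈ W1 := hWsub u hu v hv
    have h2 : w ∈ W1 := by
      have h0W : (0:E) ∈ W := mem_of_mem_nhds hW
      simpa using hWsub w hw 0 h0W
    exact hW1sub _ h1 _ h2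
  obtain ⟨m, hm⟩ := hsmall W hW
  -- a good index from the cluster point
  have hfreq : ∃ n₀, m ≤ n₀ ∧ S n₀ - s ∈ W := by
    have hUs : {v : E | v - s ∈ W} ∈ 𝓝 s :=
      (continuous_id.sub continuous_const).continuousAt.preimage_mem_nhds
        (by simpa using hW)
    have hfr := (mapClusterPt_iff_frequently.1 hs) _ hUs
    obtain ⟨n₀, hn₀⟩ := (hfr.and_eventually (eventually_ge_atTop m)).exists
    exact ⟨n₀, hn₀.2, hn₀.1⟩
  obtain ⟨n₀, hn₀m, hn₀⟩ := hfreq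
  refine ⟨m, fun n hn => ?_⟩
  have hu : S n - S m ∈ W := hm (hsum m n hn)
  have hvmem : S n₀ - S m ∈ ((1:ℝ)/2)^m • A := hsum m n₀ hn₀m
  have hv : -(S n₀ - S m) ∈ W := by
    apply hm
    obtain ⟨w, hw, hwe⟩ := Set.mem_smul_set.1 hvmem
    rw [← hwe]
    refine Set.mem_smul_set.2 ⟨(-1:ℝ) • w, hbal.smul_mem (by simp) hw, ?_⟩
    rw [smul_comm]
    simp
  have key : s + ((S n - S m) + -(S n₀ - S m) + (S n₀ - s)) ∈ V :=
    hWW _ _ _ hu hv hn₀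
  have heq : s + ((S n - S m) + -(S n₀ - S m) + (S n₀ - s)) = S n := by abel
  rwa [heq] at key


theorem stmt2 {E : Type*} [AddCommGroup E] [Module ℝ E] [TopologicalSpace E]
    [IsTopologicalAddGroup E] [ContinuousSMul ℝ E] [LocallyConvexSpace ℝ E]
    (hE : LocallyCompleteLCS E) : PropertyMK E := by
  intro x hx
  exact stmt2' hE x hx
end

section
/- The complete locally convex space ℝ^(ℓ²) (the product of copies of ℝ indexed by elements of ℓ²) does not have the property (K): the sequence x_n := (ξ(n))_{ξ ∈ ℓ²} converges to 0 but no subsequence (x_{n_k}) has a convergent series ∑_k x_{n_k}. -/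
open Filter Topology

open ENNReal in
theorem stmt3 :
    Tendsto (fun n (ξ : lp (fun _ : ℕ => ℝ) 2) => (ξ n : ℝ)) atTop
      (𝓝 (0 : (lp (fun _ : ℕ => ℝ) 2) → ℝ)) ∧
    ∀ φ : ℕ → ℕ, StrictMono φ →
      ¬ ∃ s : (lp (fun _ : ℕ => ℝ) 2) → ℝ,
        Tendsto (fun N => ∑ k ∈ Finset.range N,
            (fun ξ : lp (fun _ : ℕ => ℝ) 2 => (ξ (φ k) : ℝ))) atTop (𝓝 s) := by
  constructor
  · rw [tendsto_pi_nhds]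
    intro ξ
    simp only [Pi.zero_apply]
    have hsum : Summable fun i => ‖(ξ : ∀ _ : ℕ, ℝ) i‖ ^ (2 : ℝ) := by
      have h := (memℓp_gen_iff (by norm_num : (0:ℝ) < (2:ℝ≥0∞).toReal)).1 ξ.2
      simpa using h
    have h0 : Tendsto (fun n => ‖(ξ : ∀ _ : ℕ, ℝ) n‖ ^ (2:ℝ)) atTop (𝓝 0) := by
      have := hsum.tendsto_cofinite_zero
      rwa [Nat.cofinite_eq_atTop] at this
    have h1 : Tendsto (fun n => ‖(ξ : ∀ _ : ℕ, ℝ) n‖) atTop (𝓝 0) := by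
      have : Tendsto (fun n => Real.sqrt (‖(ξ : ∀ _ : ℕ, ℝ) n‖ ^ (2:ℝ))) atTop (𝓝 (Real.sqrt 0)) :=
        (Real.continuous_sqrt.continuousAt.tendsto).comp h0
      simpa [Real.rpow_natCast, Real.sqrt_sq_eq_abs, abs_norm] using this
    simpa [tendsto_zero_iff_norm_tendsto_zero] using h1
  · rintro φ hφ ⟨s, hs⟩
    have hφinj := hφ.injective
    set f : ℕ → ℝ := Function.extend φ (fun k => 1 / (k + 1 : ℝ)) 0 with hf
    have hfφ : ∀ k, f (φ k) = 1 / (k + 1 : ℝ) := fun k => hφinj.extend_apply _ _ _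
    have hmem : Memℓp f 2 := by
      apply memℓp_gen
      have hcomp : Summable ((fun i => ‖f i‖ ^ (2:ℝ≥0∞).toReal) ∘ φ) := by
        have : Summable (fun k : ℕ => (1 : ℝ) / ((k+1) : ℝ) ^ (2:ℕ)) := by
          have h2 : Summable (fun n : ℕ => 1 / (n : ℝ) ^ (2:ℕ)) :=
            Real.summable_one_div_nat_pow.mpr one_lt_two
          have h3 := h2.comp_injective Nat.succ_injective
          apply h3.congr
          intro k
          simp [Function.comp, Nat.succ_eq_add_one]
        apply this.congr
        intro k
        simp [Function.comp, hfφ k, ENNReal.toReal_ofNat, Real.rpow_natCast,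
          abs_of_nonneg (by positivity : (0:ℝ) ≤ 1 / (k+1 : ℝ)), div_pow]
      rw [← hφinj.summable_iff]
      · exact hcomp
      · intro x hx
        have : f x = 0 := Function.extend_apply' _ _ _ (by simpa [Set.range] using hx)
        simp [this]
    set ξ0 : lp (fun _ : ℕ => ℝ) 2 := ⟨f, hmem⟩ with hξ0
    have hpt : Tendsto (fun N => ∑ k ∈ Finset.range N, (ξ0 (φ k) : ℝ)) atTop (𝓝 (s ξ0)) := by
      have := tendsto_pi_nhds.1 hs ξ0
      simpa using this
    have hdiv : Tendsto (fun N => ∑ k ∈ Finset.range N, (ξ0 (φ k) : ℝ)) atTop atTop := by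
      have := Real.tendsto_sum_range_one_div_nat_succ_atTop
      apply this.congr
      intro N
      apply Finset.sum_congr rfl
      intro k _
      exact (hfφ k).symm
    exact not_tendsto_nhds_of_tendsto_atTop hdiv _ hpt
end

section
/- Let E be a topological vector space with property (α₄): for every family (ξ_n) of sequences converging to 0, there is a sequence converging to 0 meeting infinitely many of the ξ_n. Then every null sequence in E contains a Mackey null subsequence; consequently E has property (K) if and only if E has property (MK). -/
open Filter Topology

theorem stmt4 {E : Type*} [AddCommGroup E] [Module ℝ E] [TopologicalSpace E]
    [IsTopologicalAddGroup E] [ContinuousSMul ℝ E]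
    (hα : ∀ ξ : ℕ → ℕ → E, (∀ n, Tendsto (ξ n) atTop (𝓝 (0 : E))) →
      ∃ σ : ℕ → E, Tendsto σ atTop (𝓝 (0 : E)) ∧ {n | ∃ k m, ξ n k = σ m}.Infinite) :
    (∀ x : ℕ → E, Tendsto x atTop (𝓝 (0 : E)) →
      ∃ ψ : ℕ → ℕ, StrictMono ψ ∧ IsMackeyNull (x ∘ ψ)) ∧
    (PropertyK E ↔ PropertyMK E) := by
  have mackey_null : ∀ x : ℕ → E, IsMackeyNull x → Tendsto x atTop (𝓝 (0 : E)) := by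
    intro x ⟨a, hpos, _, hatop, hnull⟩
    have hinv : Tendsto (fun n => (a n)⁻¹) atTop (𝓝 (0 : ℝ)) :=
      tendsto_inv_atTop_zero.comp hatop
    have := hinv.smul hnull
    rw [zero_smul] at this
    convert this using 2 with n
    rw [inv_smul_smul₀ (hpos n).ne']
  have main : ∀ x : ℕ → E, Tendsto x atTop (𝓝 (0 : E)) →
      ∃ ψ : ℕ → ℕ, StrictMono ψ ∧ IsMackeyNull (x ∘ ψ) := by
    intro x hx
    set ξ : ℕ → ℕ → E := fun n k => ((n : ℝ) + 1) • x (k + n) with hξ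
    have hξnull : ∀ n, Tendsto (ξ n) atTop (𝓝 (0 : E)) := by
      intro n
      have h1 : Tendsto (fun k => x (k + n)) atTop (𝓝 (0 : E)) :=
        hx.comp (tendsto_add_atTop_nat n)
      have := h1.const_smul ((n : ℝ) + 1)
      rwa [smul_zero] at this
    obtain ⟨σ, hσ, hS⟩ := hα ξ hξnull
    set S := {n | ∃ k m, ξ n k = σ m} with hSdef
    have hsel : ∀ n, n ∈ S → ∃ k m, ((n : ℝ) + 1) • x (k + n) = σ m := fun n hn => hn
    choose! kk mm hkm using hsel
    set p : ℕ → ℕ := fun n => kk n + n with hp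
    have hple : ∀ n, n ≤ p n := fun n => Nat.le_add_left n (kk n)
    choose F hFS hFgt using fun b => hS.exists_gt b
    set ns : ℕ → ℕ := fun j => Nat.rec (F 0) (fun _ prev => F (p prev)) j with hns
    have hnsS : ∀ j, ns j ∈ S := by
      intro j
      cases j with
      | zero => exact hFS 0
      | succ i => exact hFS (p (ns i))
    have hstep : ∀ j, p (ns j) < ns (j + 1) := fun j => hFgt (p (ns j))
    set ψ : ℕ → ℕ := fun j => p (ns j) with hψdef
    have hψmono : StrictMono ψ := by
      apply strictMono_nat_of_lt_succ
      intro j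
      exact lt_of_lt_of_le (hstep j) (hple (ns (j + 1)))
    have hnsmono : StrictMono ns := by
      apply strictMono_nat_of_lt_succ
      intro j
      exact lt_of_le_of_lt (hple (ns j)) (hstep j)
    have hnsle : ∀ j, j ≤ ns j := fun j => hnsmono.le_apply
    have key : ∀ j, ((ns j : ℝ) + 1) • x (ψ j) = σ (mm (ns j)) := fun j =>
      hkm (ns j) (hnsS j)
    have hposns : ∀ j, (0 : ℝ) < (ns j : ℝ) + 1 := fun j => by positivity
    have hxψ : ∀ j, x (ψ j) = ((ns j : ℝ) + 1)⁻¹ • σ (mm (ns j)) := by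
      intro j
      rw [← key j, inv_smul_smul₀ (hposns j).ne']
    set a : ℕ → ℝ := fun j => Real.sqrt ((ns j : ℝ) + 1) with ha
    have hapos : ∀ j, 0 < a j := fun j => Real.sqrt_pos.2 (hposns j)
    have hamono : Monotone a := by
      intro i j hij
      exact Real.sqrt_le_sqrt (by exact_mod_cast Nat.succ_le_succ (hnsmono.monotone hij))
    have haatop : Tendsto a atTop atTop := by
      apply tendsto_atTop_atTop_of_monotone hamono
      intro b
      rcases le_or_gt b 0 with hb | hb
      · exact ⟨0, hb.trans (hapos 0).le⟩
      · refine ⟨⌈b ^ 2⌉₊, (Real.le_sqrt' hb).2 ?_⟩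
        calc b ^ 2 ≤ ⌈b ^ 2⌉₊ := Nat.le_ceil _
          _ ≤ (ns ⌈b ^ 2⌉₊ : ℝ) := by exact_mod_cast hnsle _
          _ ≤ (ns ⌈b ^ 2⌉₊ : ℝ) + 1 := by linarith
    refine ⟨ψ, hψmono, a, hapos, hamono, haatop, ?_⟩
    have heq : ∀ j, a j • (x ∘ ψ) j = (a j)⁻¹ • σ (mm (ns j)) := by
      intro j
      have hsq : a j * a j = (ns j : ℝ) + 1 := Real.mul_self_sqrt (hposns j).le
      have : a j * ((ns j : ℝ) + 1)⁻¹ = (a j)⁻¹ := by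
        rw [← hsq]
        field_simp
      simp only [Function.comp_apply, hxψ, smul_smul, this]
    have hinv : Tendsto (fun j => (a j)⁻¹) atTop (𝓝 (0 : ℝ)) :=
      tendsto_inv_atTop_zero.comp haatop
    have hbdd : Bornology.IsVonNBounded ℝ (Set.range σ) := hσ.isVonNBounded_range ℝ
    have := hbdd.smul_tendsto_zero (x := fun j => σ (mm (ns j)))
      (Filter.Eventually.of_forall fun j => Set.mem_range_self _) hinv
    refine this.congr fun j => ?_
    exact (heq j).symm
  refine ⟨main, ?_, ?_⟩
  · intro hK x hmx
    exact hK x (mackey_null x hmx)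
  · intro hMK x hx φ hφ
    obtain ⟨ψ, hψ, hM⟩ := main (x ∘ φ) (hx.comp hφ.tendsto_atTop)
    obtain ⟨ψ', hψ', s, hsum⟩ := hMK ((x ∘ φ) ∘ ψ) hM id strictMono_id
    exact ⟨ψ ∘ ψ', hψ.comp hψ', s, hsum⟩
end

section
/- Every feral topological vector space (one in which every bounded set is finite-dimensional) has the property (K): every null sequence is a K-sequence. -/
open Filter Topology

theorem stmt5 {E : Type*} [AddCommGroup E] [Module ℝ E] [TopologicalSpace E]
    [IsTopologicalAddGroup E] [ContinuousSMul ℝ E] [T2Space E]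
    (hferal : Feral E) : PropertyK E := by
  intro x hx φ hφ
  -- The range of a null sequence is bounded, so it spans a finite-dimensional subspace
  have hbdd : Bornology.IsVonNBounded ℝ (Set.range x) := hx.isVonNBounded_range ℝ
  set F : Submodule ℝ E := Submodule.span ℝ (Set.range x) with hF
  have hfd : FiniteDimensional ℝ F := hferal _ hbdd
  have hmem : ∀ n, x n ∈ F := fun n => Submodule.subset_span (Set.mem_range_self n)
  -- lift the sequence to F
  set y : ℕ → F := fun n => ⟨x n, hmem n⟩ with hy
  have hy0 : Tendsto y atTop (𝓝 (0 : F)) := by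
    rw [Topology.IsEmbedding.subtypeVal.tendsto_nhds_iff]
    exact hx
  -- F is linearly homeomorphic to ℝ^d
  let b := Module.finBasis ℝ F
  let e : F ≃L[ℝ] (Fin (Module.finrank ℝ F) → ℝ) := b.equivFun.toContinuousLinearEquiv
  set z : ℕ → (Fin (Module.finrank ℝ F) → ℝ) := fun n => e (y n) with hz
  have hz0 : Tendsto z atTop (𝓝 0) := by
    have := (e.continuous.tendsto 0).comp hy0
    simp only [map_zero] at this; exact this
  have hzφ : Tendsto (fun k => ‖z (φ k)‖) atTop (𝓝 0) := by
    have := (hz0.comp hφ.tendsto_atTop)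
    exact (tendsto_zero_iff_norm_tendsto_zero.mp this)
  -- extract a subsequence with geometric norm bounds
  obtain ⟨ψ, hψ, hψle⟩ := extraction_forall_of_eventually
    (P := fun n k => ‖z (φ k)‖ ≤ (1/2 : ℝ) ^ n)
    (fun n => hzφ.eventually (ge_mem_nhds (by positivity)))
  have hsum : Summable (fun k => z (φ (ψ k))) :=
    Summable.of_norm_bounded summable_geometric_two (fun k => hψle k)
  obtain ⟨s, hs⟩ := hsum
  refine ⟨ψ, hψ, ((e.symm s : F) : E), ?_⟩
  have hts : Tendsto (fun N => ∑ k ∈ Finset.range N, z (φ (ψ k))) atTop (𝓝 s) :=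
    hs.tendsto_sum_nat
  have : Tendsto (fun N => ((e.symm (∑ k ∈ Finset.range N, z (φ (ψ k))) : F) : E)) atTop
      (𝓝 ((e.symm s : F) : E)) :=
    (continuous_subtype_val.tendsto _).comp ((e.symm.continuous.tendsto s).comp hts)
  convert this using 2 with N
  simp only [map_sum, AddSubmonoidClass.coe_finset_sum]
  apply Finset.sum_congr rfl
  intro k _
  simp [z, y]
end

section
/- In a feral topological vector space, every closed bounded subset is compact; hence a feral Hausdorff topological vector space is quasi-complete. -/
open Filter Topology Pointwise

lemma aux_preimage_bounded {E : Type*} [AddCommGroup E] [Module ℝ E] [TopologicalSpace E]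
    (p : Submodule ℝ E) {s : Set E} (hs : Bornology.IsVonNBounded ℝ s) :
    Bornology.IsVonNBounded ℝ ((↑) ⁻¹' s : Set p) := by
  intro V hV
  rw [nhds_induced] at hV
  obtain ⟨U, hU, hUV⟩ := hV
  simp only [Submodule.coe_zero] at hU
  have habs : ∀ᶠ a in Bornology.cobounded ℝ, s ⊆ a • U := hs hU
  show ∀ᶠ a in Bornology.cobounded ℝ, (((↑) : p → E) ⁻¹' s) ⊆ a • V
  rw [Filter.eventually_iff_exists_mem] at habs ⊢
  obtain ⟨w, hw, hws⟩ := habs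
  have h0 : ({0}ᶜ : Set ℝ) ∈ Bornology.cobounded ℝ :=
    (Bornology.isBounded_singleton (x := (0:ℝ))).compl
  refine ⟨w ∩ {0}ᶜ, Filter.inter_mem hw h0, ?_⟩
  rintro c ⟨hcw, hc0⟩ x hx
  have hc0' : c ≠ 0 := hc0
  have hxs : (x : E) ∈ c • U := hws c hcw hx
  obtain ⟨u, hu, hux⟩ := hxs
  have hmem : c⁻¹ • (x : E) ∈ p := p.smul_mem _ x.2
  refine ⟨⟨c⁻¹ • (x : E), hmem⟩, hUV ?_, ?_⟩
  · show c⁻¹ • (x : E) ∈ U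
    rw [← hux, smul_smul, inv_mul_cancel₀ hc0', one_smul]; exact hu
  · ext
    simp [smul_smul, mul_inv_cancel₀ hc0']

theorem stmt6 {E : Type*} [AddCommGroup E] [Module ℝ E] [UniformSpace E]
    [IsUniformAddGroup E] [ContinuousSMul ℝ E] [T2Space E]
    (hferal : Feral E) :
    ∀ s : Set E, IsClosed s → Bornology.IsVonNBounded ℝ s → IsCompact s ∧ IsComplete s := by
  intro s hclosed hbdd
  set p : Submodule ℝ E := Submodule.span ℝ s with hp
  haveI : FiniteDimensional ℝ p := hferal s hbdd
  -- the preimage of s in p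
  set s' : Set p := ((↑) : p → E) ⁻¹' s with hs'
  have hs'closed : IsClosed s' := hclosed.preimage continuous_subtype_val
  have hs'bdd : Bornology.IsVonNBounded ℝ s' := aux_preimage_bounded p hbdd
  -- a continuous linear equivalence with a Euclidean space
  obtain ⟨e⟩ : Nonempty (p ≃ₗ[ℝ] (Fin (Module.finrank ℝ p) → ℝ)) :=
    ⟨Module.finBasis ℝ p |>.equivFun⟩
  let eC : p ≃L[ℝ] (Fin (Module.finrank ℝ p) → ℝ) := e.toContinuousLinearEquiv
  have hcomp : IsCompact (eC '' s') := by
    rw [Metric.isCompact_iff_isClosed_bounded]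
    constructor
    · exact eC.toHomeomorph.isClosedMap _ hs'closed
    · rw [← NormedSpace.isVonNBounded_iff ℝ]
      exact hs'bdd.image (eC : p →SL[RingHom.id ℝ] (Fin (Module.finrank ℝ p) → ℝ))
  have hcomp' : IsCompact s' := by
    have : s' = eC.symm '' (eC '' s') := by
      rw [Set.image_image]; simp
    rw [this]
    exact hcomp.image eC.symm.continuous
  have hss : s ⊆ (p : Set E) := Submodule.subset_span
  have himg : ((↑) : p → E) '' s' = s := by
    apply Set.image_preimage_eq_of_subset
    rwa [Subtype.range_coe]
  have hcompact : IsCompact s := himg ▸ hcomp'.image continuous_subtype_val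
  exact ⟨hcompact, hcompact.isComplete⟩
end

section
/- If L is a sequentially closed linear subspace of a topological vector space E with property (MK), then L has property (MK). -/
open Filter Topology

theorem stmt7 {E : Type*} [AddCommGroup E] [Module ℝ E] [TopologicalSpace E]
    [IsTopologicalAddGroup E] [ContinuousSMul ℝ E]
    (L : Submodule ℝ E)
    (hseq : ∀ x : ℕ → E, (∀ n, x n ∈ L) → ∀ y : E, Tendsto x atTop (𝓝 y) → y ∈ L)
    (hMK : PropertyMK E) :
    ∀ x : ℕ → E, (∀ n, x n ∈ L) → IsMackeyNull x →
      ∀ φ : ℕ → ℕ, StrictMono φ → ∃ ψ : ℕ → ℕ, StrictMono ψ ∧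
        ∃ s ∈ L, Tendsto (fun N => ∑ k ∈ Finset.range N, x (φ (ψ k))) atTop (𝓝 s) := by
  intro x hxL hMN φ hφ
  obtain ⟨ψ, hψ, s, hs⟩ := hMK x hMN φ hφ
  exact ⟨ψ, hψ, s, hseq _ (fun N => Submodule.sum_mem _ (fun k _ => hxL _)) s hs, hs⟩
end

section
/- A topological vector space E is κ-Fréchet–Urysohn if and only if for every sequence (U_n) of open subsets of E with 0 ∈ closure(U_n) for all n, there exist a strictly increasing sequence (n_k) of naturals and points x_k ∈ U_{n_k} with x_k → 0. -/
open Filter Topology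

section Aux

open Set

variable {E : Type*} [AddCommGroup E] [Module ℝ E] [TopologicalSpace E]
  [IsTopologicalAddGroup E] [ContinuousSMul ℝ E]

private lemma aux_closure_image_add (a : E) (s : Set E) :
    closure ((fun y => a + y) '' s) = (fun y => a + y) '' closure s := by
  have h := (Homeomorph.addLeft a).image_closure s
  simpa [Homeomorph.coe_addLeft] using h.symm

private lemma aux_clzero_smul (c : ℝ) {z : E} (hz : z ∈ closure ({0} : Set E)) :
    c • z ∈ closure ({0} : Set E) := by
  have h := image_closure_subset_closure_image (f := fun y : E => c • y)
      (s := ({0} : Set E)) (continuous_const_smul c)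
  have hmem : c • z ∈ (fun y : E => c • y) '' closure ({0} : Set E) := ⟨z, hz, rfl⟩
  simpa using h hmem

private lemma aux_mem_nhds {z : E} (hz : z ∈ closure ({0} : Set E)) {W : Set E}
    (hW : W ∈ 𝓝 (0 : E)) : z ∈ W := by
  have hneg : -z ∈ closure ({0} : Set E) := by
    simpa using aux_clzero_smul (-1 : ℝ) hz
  have h0 : (0 : E) ∈ closure ({z} : Set E) := by
    have h1 : ({z} : Set E) = (fun y => z + y) '' ({0} : Set E) := by simp
    rw [h1, aux_closure_image_add]
    exact ⟨-z, hneg, by abel⟩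
  have h2 := mem_closure_iff.1 h0 (interior W) isOpen_interior
    (mem_interior_iff_mem_nhds.2 hW)
  obtain ⟨w, hw1, hw2⟩ := h2
  rcases hw2 with rfl
  exact interior_subset hw1

private lemma aux_extract {n : ℕ → ℕ} (h : Tendsto n atTop atTop) :
    ∃ ψ : ℕ → ℕ, StrictMono ψ ∧ StrictMono (fun k => n (ψ k)) := by
  have key : ∀ m : ℕ, ∃ j, m < j ∧ n m < n j := by
    intro m
    obtain ⟨J, hJ⟩ := eventually_atTop.1 (h.eventually_ge_atTop (n m + 1))
    refine ⟨max J (m + 1), lt_of_lt_of_le (Nat.lt_succ_self m) (le_max_right _ _), ?_⟩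
    have := hJ (max J (m + 1)) (le_max_left _ _)
    omega
  choose f hf1 hf2 using key
  refine ⟨fun k => f^[k] 0, ?_, ?_⟩
  · apply strictMono_nat_of_lt_succ
    intro k
    rw [Function.iterate_succ_apply']
    exact hf1 _
  · apply strictMono_nat_of_lt_succ
    intro k
    show n (f^[k] 0) < n (f^[k + 1] 0)
    rw [Function.iterate_succ_apply']
    exact hf2 _

end Aux

open Set in
theorem stmt9 {E : Type*} [AddCommGroup E] [Module ℝ E] [TopologicalSpace E]
    [IsTopologicalAddGroup E] [ContinuousSMul ℝ E] :
    KappaFrechetUrysohn E ↔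
    ∀ U : ℕ → Set E, (∀ n, IsOpen (U n)) → (∀ n, (0 : E) ∈ closure (U n)) →
      ∃ (nk : ℕ → ℕ) (x : ℕ → E), StrictMono nk ∧ (∀ k, x k ∈ U (nk k)) ∧
        Tendsto x atTop (𝓝 (0 : E)) := by
  constructor
  · intro hk U hUopen hUcl
    by_cases hS : {n | (U n ∩ closure ({0} : Set E)).Nonempty}.Infinite
    · -- Case I: infinitely many Uₙ meet the closure of {0}
      set p : ℕ → Prop := fun n => (U n ∩ closure ({0} : Set E)).Nonempty with hp
      have hS' : (setOf p).Infinite := hS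
      have hmem : ∀ k, p (Nat.nth p k) := fun k => Nat.nth_mem_of_infinite hS' k
      refine ⟨Nat.nth p, fun k => (hmem k).choose, Nat.nth_strictMono hS', ?_, ?_⟩
      · exact fun k => (hmem k).choose_spec.1
      · rw [Filter.tendsto_iff_forall_eventually_mem]
        intro W hW
        exact Filter.Eventually.of_forall fun k =>
          aux_mem_nhds (hmem k).choose_spec.2 hW
    · -- Case II
      rw [Set.not_infinite] at hS
      obtain ⟨n₀, hn₀⟩ := hS.exists_notMem
      have hU0ne : (U n₀).Nonempty := by
        rcases closure_nonempty_iff.1 ⟨0, hUcl n₀⟩ with h; exact h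
      obtain ⟨v, hv⟩ := hU0ne
      have hvne : v ∉ closure ({0} : Set E) := fun h => hn₀ ⟨v, hv, h⟩
      set x : ℕ → E := fun n => ((n : ℝ) + 1)⁻¹ • v with hxdef
      have hxne : ∀ n, x n ∉ closure ({0} : Set E) := by
        intro n hmem
        apply hvne
        have h1 : ((n : ℝ) + 1) • x n = v := by
          rw [hxdef]
          rw [smul_smul, mul_inv_cancel₀ (by positivity : ((n : ℝ) + 1) ≠ 0), one_smul]
        rw [← h1]
        exact aux_clzero_smul _ hmem
      have hx0 : Tendsto x atTop (𝓝 (0 : E)) := by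
        have h1 : Tendsto (fun n : ℕ => ((n : ℝ) + 1)⁻¹) atTop (𝓝 0) := by
          have := tendsto_one_div_add_atTop_nhds_zero_nat (𝕜 := ℝ)
          simpa [one_div] using this
        have h2 := h1.smul_const v
        simpa using h2
      -- construct the shrunken sets
      have hVn : ∀ n, ∃ V : Set E, IsOpen V ∧ (0 : E) ∈ V ∧ -x n ∉ closure V := by
        intro n
        have h1 : (0 : E) ∉ closure ({-x n} : Set E) := by
          intro h0
          apply hxne n
          have h2 : ({-x n} : Set E) = (fun y => -x n + y) '' ({0} : Set E) := by simp
          rw [h2, aux_closure_image_add] at h0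
          obtain ⟨w, hw, hwx⟩ := h0
          have h3 : -x n + w = 0 := hwx
          have h4 : w = x n := by
            have := neg_add_eq_zero.mp h3
            exact this.symm
          rwa [← h4]
        have h2 : (closure ({-x n} : Set E))ᶜ ∈ 𝓝 (0 : E) :=
          isClosed_closure.isOpen_compl.mem_nhds h1
        obtain ⟨C, hC𝓝, hCclosed, hCsub⟩ := exists_mem_nhds_isClosed_subset h2
        refine ⟨interior C, isOpen_interior, mem_interior_iff_mem_nhds.2 hC𝓝, ?_⟩
        intro hmem
        have hCC : closure (interior C) ⊆ C := closure_minimal interior_subset hCclosed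
        exact (hCsub (hCC hmem)) (subset_closure rfl)
      choose V hVopen hV0 hVx using hVn
      set W : ℕ → Set E := fun n => U n ∩ V n with hWdef
      have hWcl : ∀ n, (0 : E) ∈ closure (W n) := by
        intro n
        rw [mem_closure_iff]
        intro O hO hO0
        obtain ⟨w, hw1, hw2⟩ := mem_closure_iff.1 (hUcl n) (O ∩ V n) (hO.inter (hVopen n))
          ⟨hO0, hV0 n⟩
        exact ⟨w, hw1.1, hw2, hw1.2⟩
      have hWx : ∀ n, -x n ∉ closure (W n) := fun n h =>
        hVx n (closure_mono inter_subset_right h)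
      set A : Set E := ⋃ n, (fun y => x n + y) '' W n with hAdef
      have hAopen : IsOpen A := isOpen_iUnion fun n =>
        (isOpenMap_add_left (x n)) _ ((hUopen n).inter (hVopen n))
      have hxA : ∀ n, x n ∈ closure A := by
        intro n
        have h1 : x n ∈ closure ((fun y => x n + y) '' W n) := by
          rw [aux_closure_image_add]
          exact ⟨0, hWcl n, by simp⟩
        exact closure_mono (subset_iUnion (fun n => (fun y => x n + y) '' W n) n) h1
      have h0A : (0 : E) ∈ closure A := by
        have := isClosed_closure (s := A)
        exact this.mem_of_tendsto hx0 (Filter.Eventually.of_forall hxA)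
      obtain ⟨a, haA, ha0⟩ := hk A hAopen 0 h0A
      have hch : ∀ j, ∃ n, a j ∈ (fun y => x n + y) '' W n := fun j => mem_iUnion.1 (haA j)
      choose m hm using hch
      have hfib : ∀ n, {j | m j = n}.Finite := by
        intro n
        by_contra hinf
        have hinf' : {j | m j = n}.Infinite := hinf
        have hg : StrictMono (Nat.nth (fun j => m j = n)) := Nat.nth_strictMono hinf'
        have hmem2 : ∀ k, a (Nat.nth (fun j => m j = n) k) ∈ (fun y => x n + y) '' W n := by
          intro k
          have heq : m (Nat.nth (fun j => m j = n) k) = n := Nat.nth_mem_of_infinite hinf' k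
          have := hm (Nat.nth (fun j => m j = n) k)
          rwa [heq] at this
        have h0cl : (0 : E) ∈ closure ((fun y => x n + y) '' W n) :=
          mem_closure_of_tendsto (ha0.comp hg.tendsto_atTop)
            (Filter.Eventually.of_forall hmem2)
        rw [aux_closure_image_add] at h0cl
        obtain ⟨w, hw, hwx⟩ := h0cl
        apply hWx n
        have h3 : x n + w = 0 := hwx
        have hwx' : w = -x n := by
          rw [add_comm] at h3
          exact add_eq_zero_iff_eq_neg.mp h3
        rwa [hwx'] at hw
      have hmt : Tendsto m atTop atTop := by
        rw [tendsto_atTop]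
        intro N
        have hfin : {j | m j < N}.Finite := by
          have hsub : {j | m j < N} ⊆ ⋃ n ∈ Finset.range N, {j | m j = n} := by
            intro j hj
            simp only [Set.mem_iUnion, Finset.mem_range]
            exact ⟨m j, hj, rfl⟩
          exact Set.Finite.subset (Set.Finite.biUnion (Finset.range N).finite_toSet
            fun n _ => hfib n) hsub
        obtain ⟨M, hM⟩ := hfin.bddAbove
        rw [eventually_atTop]
        refine ⟨M + 1, fun j hj => ?_⟩
        by_contra hlt
        have : j ∈ {j | m j < N} := by simpa using Nat.lt_of_not_le hlt
        have := hM this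
        omega
      obtain ⟨ψ, hψ, hnψ⟩ := aux_extract hmt
      refine ⟨fun k => m (ψ k), fun k => a (ψ k) - x (m (ψ k)), hnψ, ?_, ?_⟩
      · intro k
        show a (ψ k) - x (m (ψ k)) ∈ U (m (ψ k))
        obtain ⟨w, hw, hwx⟩ := hm (ψ k)
        have h3 : x (m (ψ k)) + w = a (ψ k) := hwx
        have h4 : a (ψ k) - x (m (ψ k)) = w := by
          rw [← h3]; abel
        rw [h4]
        exact hw.1
      · have h1 : Tendsto (fun k => a (ψ k)) atTop (𝓝 (0 : E)) := ha0.comp hψ.tendsto_atTop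
        have h2 : Tendsto (fun k => x (m (ψ k))) atTop (𝓝 (0 : E)) :=
          hx0.comp hnψ.tendsto_atTop
        simpa using h1.sub h2
  · intro h U hUopen y hy
    set U' : ℕ → Set E := fun _ => (fun z => -y + z) '' U with hU'
    have hop : ∀ n, IsOpen (U' n) := fun n => (isOpenMap_add_left (-y)) _ hUopen
    have hcl : ∀ n, (0 : E) ∈ closure (U' n) := by
      intro n
      show (0 : E) ∈ closure ((fun z => -y + z) '' U)
      rw [aux_closure_image_add]
      exact ⟨y, hy, by abel⟩
    obtain ⟨nk, z, hmono, hz, hz0⟩ := h U' hop hcl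
    refine ⟨fun k => y + z k, fun k => ?_, ?_⟩
    · show y + z k ∈ U
      obtain ⟨u, hu, huz⟩ := hz k
      have huz' : -y + u = z k := huz
      have h4 : y + z k = u := by
        rw [← huz']; abel
      rw [h4]
      exact hu
    · have := hz0.const_add y
      simpa using this
end

section
/- Every Fréchet–Urysohn topological vector space with property (K) is a Baire space. -/
open Filter Topology

section Aux
open Set

section Helpers
variable {E : Type*} [AddCommGroup E] [TopologicalSpace E] [IsTopologicalAddGroup E]

/-- symmetry of specialization in topological groups -/
theorem mem_closure_zero_symm {x : E} (h : x ∈ closure ({0} : Set E)) :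
    (0 : E) ∈ closure ({x} : Set E) := by
  have hc : Continuous (fun w : E => x - w) := continuous_const.sub continuous_id
  have h1 : (0 : E) ∈ (fun w : E => x - w) '' closure ({0} : Set E) :=
    ⟨x, h, by simp⟩
  have h2 := image_closure_subset_closure_image hc h1
  have h3 : (fun w : E => x - w) '' ({0} : Set E) = {x} := by simp
  rwa [h3] at h2

theorem neg_mem_closure_zero {x : E} (h : x ∈ closure ({0} : Set E)) :
    -x ∈ closure ({0} : Set E) := by
  have hc : Continuous (fun w : E => -w) := continuous_neg
  have h1 : -x ∈ (fun w : E => -w) '' closure ({0} : Set E) := ⟨x, h, rfl⟩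
  have h2 := image_closure_subset_closure_image hc h1
  have h3 : (fun w : E => -w) '' ({0} : Set E) = {(0:E)} := by simp
  rwa [h3] at h2

/-- two limits of a sequence differ by an element of `closure {0}` -/
theorem sub_mem_closure_zero_of_two_limits (f : ℕ → E) {a b : E}
    (ha : Tendsto f atTop (𝓝 a)) (hb : Tendsto f atTop (𝓝 b)) :
    a - b ∈ closure ({0} : Set E) := by
  rw [mem_closure_iff]
  intro o ho hab
  have hsub : Tendsto (fun n => f n - f n) atTop (𝓝 (a - b)) := ha.sub hb
  have : ∀ᶠ n in atTop, f n - f n ∈ o := hsub.eventually (ho.mem_nhds hab)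
  obtain ⟨n, hn⟩ := this.exists
  exact ⟨0, by simpa using hn, rfl⟩

/-- translation by an inseparable-from-zero element preserves open membership -/
theorem add_mem_open_of_mem_closure_zero {x y : E} {U : Set E}
    (hx : x ∈ closure ({0} : Set E)) (hU : IsOpen U) (hy : y ∈ U) : y + x ∈ U := by
  have h0 : (0 : E) ∈ closure ({x} : Set E) := mem_closure_zero_symm hx
  have hUy : IsOpen ((fun w : E => y + w) ⁻¹' U) := hU.preimage (continuous_const.add continuous_id)
  have h0m : (0 : E) ∈ (fun w : E => y + w) ⁻¹' U := by simpa using hy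
  rcases (mem_closure_iff.mp h0) _ hUy h0m with ⟨z, hz1, hz2⟩
  simp only [mem_singleton_iff] at hz2
  subst hz2; exact hz1

end Helpers

section Helpers2
variable {E : Type*} [AddCommGroup E] [TopologicalSpace E] [IsTopologicalAddGroup E]

/-- finite intersection of dense open sets meets any nonempty open set -/
theorem nonempty_inter_of_dense_open {ι : Type*} (s : Finset ι) (g : ι → Set E)
    (hopen : ∀ i ∈ s, IsOpen (g i)) (hdense : ∀ i ∈ s, Dense (g i)) :
    ∀ U : Set E, IsOpen U → U.Nonempty → (U ∩ ⋂ i ∈ s, g i).Nonempty := by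
  classical
  induction s using Finset.induction_on with
  | empty => intro U _ hUne; simpa using hUne
  | @insert a s ha ih =>
    intro U hU hUne
    have h1 : (U ∩ g a).Nonempty := by
      rcases hUne with ⟨x, hx⟩
      rcases (hdense a (Finset.mem_insert_self a s)).inter_open_nonempty U hU ⟨x, hx⟩ with ⟨y, hy⟩
      exact ⟨y, hy⟩
    have h2 := ih (fun i hi => hopen i (Finset.mem_insert_of_mem hi))
      (fun i hi => hdense i (Finset.mem_insert_of_mem hi))
      (U ∩ g a) (hU.inter (hopen a (Finset.mem_insert_self a s))) h1
    rcases h2 with ⟨y, ⟨hyU, hyga⟩, hyrest⟩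
    refine ⟨y, hyU, ?_⟩
    simp only [Finset.set_biInter_insert]
    exact ⟨hyga, hyrest⟩

/-- translate of a closed set with empty interior: complement is dense open -/
theorem dense_compl_translate {K : Set E} (hK : IsClosed K) (hKi : interior K = ∅) (p : E) :
    IsOpen {x : E | x + p ∉ K} ∧ Dense {x : E | x + p ∉ K} := by
  have h : {x : E | x + p ∉ K} = (Homeomorph.addRight p) ⁻¹' Kᶜ := rfl
  constructor
  · rw [h]; exact (hK.isOpen_compl).preimage (Homeomorph.addRight p).continuous
  · rw [h]
    have hd : Dense Kᶜ := interior_eq_empty_iff_dense_compl.mp hKi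
    exact hd.preimage (Homeomorph.addRight p).isOpenMap

end Helpers2

section Helpers3
variable {E : Type*} [AddCommGroup E] [TopologicalSpace E] [IsTopologicalAddGroup E]

theorem exW {C : ℕ → Set E} (hCc : ∀ n, IsClosed (C n)) (hCi : ∀ n, interior (C n) = ∅)
    [FrechetUrysohnSpace E] (m : ℕ) (Rm : Set E) (hR : Rm ∈ 𝓝 (0 : E)) (Φ : Finset E) :
    ∃ w : ℕ → E, Tendsto w atTop (𝓝 (0 : E)) ∧
      ∀ k, w k ∈ Rm ∧ ∀ j ≤ m, ∀ p ∈ Φ, w k + p ∉ C j := by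
  classical
  set T : Set E := interior Rm ∩ ⋂ q ∈ (Finset.range (m+1)) ×ˢ Φ, {x : E | x + q.2 ∉ C q.1}
    with hT
  have h0T : (0 : E) ∈ closure T := by
    rw [mem_closure_iff]
    intro o ho h0o
    have hUo : IsOpen (o ∩ interior Rm) := ho.inter isOpen_interior
    have hUne : (o ∩ interior Rm).Nonempty :=
      ⟨0, h0o, mem_interior_iff_mem_nhds.mpr hR⟩
    have := nonempty_inter_of_dense_open (E := E) ((Finset.range (m+1)) ×ˢ Φ)
      (fun q => {x : E | x + q.2 ∉ C q.1})
      (fun q _ => (dense_compl_translate (hCc q.1) (hCi q.1) q.2).1)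
      (fun q _ => (dense_compl_translate (hCc q.1) (hCi q.1) q.2).2)
      (o ∩ interior Rm) hUo hUne
    rcases this with ⟨x, ⟨hxo, hxR⟩, hxrest⟩
    exact ⟨x, hxo, hxR, hxrest⟩
  rcases mem_closure_iff_seq_limit.mp h0T with ⟨w, hwT, hwlim⟩
  refine ⟨w, hwlim, fun k => ?_⟩
  have h1 := hwT k
  rw [hT] at h1
  rcases h1 with ⟨h1a, h1b⟩
  refine ⟨interior_subset h1a, fun j hj p hp => ?_⟩
  have : w k ∈ {x : E | x + p ∉ C j} := by
    have hmem : (j, p) ∈ (Finset.range (m+1)) ×ˢ Φ :=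
      Finset.mem_product.mpr ⟨Finset.mem_range.mpr (Nat.lt_succ_of_le hj), hp⟩
    exact Set.mem_iInter₂.mp h1b (j, p) hmem
  exact this

theorem exR {C : ℕ → Set E} (hCc : ∀ n, IsClosed (C n))
    (m : ℕ) (Rm : Set E) (hR : Rm ∈ 𝓝 (0 : E)) (Φ : Finset E) :
    ∃ R' : Set E, (R' ∈ 𝓝 (0 : E) ∧ IsClosed R') ∧ (∀ x ∈ R', ∀ y ∈ R', x + y ∈ Rm) ∧
      ∀ j ≤ m, ∀ p ∈ Φ, p ∉ C j → ∀ x ∈ R', p + x ∉ C j := by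
  classical
  set A : Set E := Rm ∩ ⋂ q ∈ ((Finset.range (m+1)) ×ˢ Φ).filter (fun q => q.2 ∉ C q.1),
    {x : E | q.2 + x ∉ C q.1} with hA
  have hAnhds : A ∈ 𝓝 (0 : E) := by
    refine Filter.inter_mem hR ?_
    refine (Filter.biInter_finset_mem _).mpr ?_
    intro q hq
    rw [Finset.mem_filter] at hq
    have hopen : IsOpen {x : E | q.2 + x ∉ C q.1} :=
      ((hCc q.1).isOpen_compl).preimage (continuous_const.add continuous_id)
    exact hopen.mem_nhds (by simpa using hq.2)
  rcases exists_nhds_zero_half hAnhds with ⟨V, hV, hVadd⟩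
  rcases (closed_nhds_basis (0 : E)).mem_iff.mp hV with ⟨R', ⟨hR'nhds, hR'closed⟩, hR'sub⟩
  refine ⟨R', ⟨hR'nhds, hR'closed⟩, ?_, ?_⟩
  · intro x hx y hy
    exact Set.inter_subset_left (hVadd x (hR'sub hx) y (hR'sub hy))
  · intro j hj p hp hpC x hx
    have hxA : x ∈ A := by
      have h0 : (0:E) ∈ V := mem_of_mem_nhds hV
      have := hVadd x (hR'sub hx) 0 h0
      simpa using this
    rw [hA] at hxA
    have hmem : (j, p) ∈ ((Finset.range (m+1)) ×ˢ Φ).filter (fun q => q.2 ∉ C q.1) :=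
      Finset.mem_filter.mpr ⟨Finset.mem_product.mpr
        ⟨Finset.mem_range.mpr (Nat.lt_succ_of_le hj), hp⟩, hpC⟩
    exact Set.mem_iInter₂.mp hxA.2 (j, p) hmem
end Helpers3
section Stages
variable {E : Type*} [AddCommGroup E] [TopologicalSpace E] [IsTopologicalAddGroup E]
  [FrechetUrysohnSpace E]

variable (C : ℕ → Set E)

open scoped Classical in
/-- set of candidate partial sums built from history `wU` below stage `m` -/
noncomputable def PhiOf (wU : ℕ → ℕ → E) (m : ℕ) : Finset E :=
  ((Finset.range m ×ˢ Finset.range m).powerset).image (fun G => ∑ ab ∈ G, wU ab.1 ab.2)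

open scoped Classical in
noncomputable def pickW (hCc : ∀ n, IsClosed (C n)) (hCi : ∀ n, interior (C n) = ∅)
    (m : ℕ) (Rm : Set E) (Φ : Finset E) : ℕ → E :=
  if h : Rm ∈ 𝓝 (0 : E) then (exW hCc hCi m Rm h Φ).choose else fun _ => 0

open scoped Classical in
noncomputable def pickR (hCc : ∀ n, IsClosed (C n))
    (m : ℕ) (Rm : Set E) (Φ : Finset E) : Set E :=
  if h : Rm ∈ 𝓝 (0 : E) then (exR hCc m Rm h Φ).choose else Set.univ

variable (hCc : ∀ n, IsClosed (C n)) (hCi : ∀ n, interior (C n) = ∅)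

noncomputable def stg : ℕ → Set E × (ℕ → ℕ → E)
  | 0 => (Set.univ, fun _ _ => 0)
  | (m+1) =>
      let Rm := (stg m).1
      let wU := (stg m).2
      let Φ := PhiOf wU m
      (pickR C hCc m Rm Φ, Function.update wU m (pickW C hCc hCi m Rm Φ))

/-- the stage-m neighbourhood -/
noncomputable def Rst (m : ℕ) : Set E := (stg C hCc hCi m).1

/-- the stage-m null sequence -/
noncomputable def wst (m : ℕ) : ℕ → E :=
  pickW C hCc hCi m (Rst C hCc hCi m) (PhiOf (stg C hCc hCi m).2 m)

theorem Rst_nhds_closed : ∀ m, Rst C hCc hCi m ∈ 𝓝 (0 : E) ∧ IsClosed (Rst C hCc hCi m) := by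
  intro m
  induction m with
  | zero => exact ⟨Filter.univ_mem, isClosed_univ⟩
  | succ m ih =>
    have : Rst C hCc hCi (m+1) = pickR C hCc m (Rst C hCc hCi m) (PhiOf (stg C hCc hCi m).2 m) :=
      rfl
    rw [this, pickR, dif_pos ih.1]
    exact (exR hCc m _ ih.1 _).choose_spec.1

theorem stg_coh : ∀ m k, k < m → (stg C hCc hCi m).2 k = wst C hCc hCi k := by
  intro m
  induction m with
  | zero => intro k hk; omega
  | succ m ih =>
    intro k hk
    have hst : (stg C hCc hCi (m+1)).2
        = Function.update (stg C hCc hCi m).2 m (pickW C hCc hCi m (Rst C hCc hCi m)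
            (PhiOf (stg C hCc hCi m).2 m)) := rfl
    rw [hst]
    rcases Nat.lt_succ_iff_lt_or_eq.mp hk with h | h
    · rw [Function.update_of_ne (by omega)]
      exact ih k h
    · subst h
      rw [Function.update_self]
      rfl

theorem PhiOf_stg_eq (m : ℕ) : PhiOf (stg C hCc hCi m).2 m = PhiOf (wst C hCc hCi) m := by
  classical
  unfold PhiOf
  apply Finset.image_congr
  intro G hG
  simp only [Finset.mem_coe, Finset.mem_powerset] at hG
  apply Finset.sum_congr rfl
  intro ab hab
  have := hG hab
  rw [Finset.mem_product, Finset.mem_range] at this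
  exact congrFun (stg_coh C hCc hCi m ab.1 this.1) ab.2

theorem wst_spec (m : ℕ) : Tendsto (wst C hCc hCi m) atTop (𝓝 (0:E)) ∧
    ∀ k, wst C hCc hCi m k ∈ Rst C hCc hCi m ∧
      ∀ j ≤ m, ∀ p ∈ PhiOf (wst C hCc hCi) m, wst C hCc hCi m k + p ∉ C j := by
  have h := (Rst_nhds_closed C hCc hCi m).1
  have : wst C hCc hCi m = (exW hCc hCi m (Rst C hCc hCi m) h
      (PhiOf (stg C hCc hCi m).2 m)).choose := by
    rw [wst, pickW, dif_pos h]
  rw [this, ← PhiOf_stg_eq C hCc hCi m]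
  exact (exW hCc hCi m (Rst C hCc hCi m) h (PhiOf (stg C hCc hCi m).2 m)).choose_spec

theorem Rst_spec (m : ℕ) :
    (∀ x ∈ Rst C hCc hCi (m+1), ∀ y ∈ Rst C hCc hCi (m+1), x + y ∈ Rst C hCc hCi m) ∧
    ∀ j ≤ m, ∀ p ∈ PhiOf (wst C hCc hCi) m, p ∉ C j →
      ∀ x ∈ Rst C hCc hCi (m+1), p + x ∉ C j := by
  have h := (Rst_nhds_closed C hCc hCi m).1
  have he : Rst C hCc hCi (m+1) = (exR hCc m (Rst C hCc hCi m) h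
      (PhiOf (stg C hCc hCi m).2 m)).choose := by
    show (stg C hCc hCi (m+1)).1 = _
    have : (stg C hCc hCi (m+1)).1
        = pickR C hCc m (Rst C hCc hCi m) (PhiOf (stg C hCc hCi m).2 m) := rfl
    rw [this, pickR, dif_pos h]
  rw [he, ← PhiOf_stg_eq C hCc hCi m]
  exact (exR hCc m (Rst C hCc hCi m) h (PhiOf (stg C hCc hCi m).2 m)).choose_spec.2

end Stages
section Chain
variable {E : Type*} [AddCommGroup E] [TopologicalSpace E]

theorem Rchain_mono {R : ℕ → Set E} (h0 : ∀ m, (0:E) ∈ R m)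
    (hadd : ∀ m, ∀ x ∈ R (m+1), ∀ y ∈ R (m+1), x + y ∈ R m) :
    ∀ a b : ℕ, a ≤ b → R b ⊆ R a := by
  have hstep : ∀ b, R (b+1) ⊆ R b := by
    intro b x hx
    have := hadd b x hx 0 (h0 (b+1))
    simpa using this
  intro a b hab
  induction b, hab using Nat.le_induction with
  | base => exact fun x h => h
  | succ b _ ih => exact fun x hx => ih (hstep b hx)

theorem sum_chain {R : ℕ → Set E} (h0 : ∀ m, (0:E) ∈ R m)
    (hadd : ∀ m, ∀ x ∈ R (m+1), ∀ y ∈ R (m+1), x + y ∈ R m)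
    (v : ℕ → E) (mIdx : ℕ → ℕ) (hmono : StrictMono mIdx)
    (hv : ∀ i, v i ∈ R (mIdx i)) :
    ∀ (n : ℕ) (F : Finset ℕ), F.card = n → ∀ a, (∀ i ∈ F, a < mIdx i) →
      (∑ i ∈ F, v i) ∈ R a := by
  intro n
  induction n with
  | zero =>
    intro F hF a _
    rw [Finset.card_eq_zero.mp hF]
    simpa using h0 a
  | succ n ih =>
    intro F hF a haF
    have hne : F.Nonempty := Finset.card_pos.mp (by omega)
    set t0 := F.min' hne with ht0
    have ht0F : t0 ∈ F := F.min'_mem hne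
    have hstep : a + 1 ≤ mIdx t0 := haF t0 ht0F
    have h1 : v t0 ∈ R (a+1) :=
      Rchain_mono h0 hadd (a+1) (mIdx t0) hstep (hv t0)
    have h2 : (∑ i ∈ F.erase t0, v i) ∈ R (a+1) := by
      refine ih (F.erase t0) (by rw [Finset.card_erase_of_mem ht0F, hF]; omega) (a+1) ?_
      intro i hi
      have hit : t0 < i := by
        rcases Finset.mem_erase.mp hi with ⟨hne2, hiF⟩
        exact lt_of_le_of_ne (F.min'_le i hiF) (Ne.symm hne2)
      have := hmono hit
      omega
    have h3 := hadd a _ h1 _ h2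
    rwa [Finset.add_sum_erase F v ht0F] at h3
end Chain
section LemmaD
variable {E : Type*} [AddCommGroup E] [Module ℝ E] [TopologicalSpace E]
  [IsTopologicalAddGroup E] [ContinuousSMul ℝ E]

theorem smul_closure_zero (c : ℝ) {x : E} (hx : x ∈ closure ({0} : Set E)) :
    c • x ∈ closure ({0} : Set E) := by
  have hc : Continuous (fun w : E => c • w) := continuous_const.smul continuous_id
  have h1 : c • x ∈ (fun w : E => c • w) '' closure ({0} : Set E) := ⟨x, hx, rfl⟩
  have h2 := image_closure_subset_closure_image hc h1
  have h3 : (fun w : E => c • w) '' ({0} : Set E) = {(0:E)} := by simp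
  rwa [h3] at h2

set_option maxHeartbeats 2000000 in
theorem lemmaD [FrechetUrysohnSpace E] (d : E) (hd : d ∉ closure ({0} : Set E))
    (w : ℕ → ℕ → E) (hw : ∀ m, Tendsto (w m) atTop (𝓝 (0:E))) :
    ∃ μ κ : ℕ → ℕ, StrictMono μ ∧ Tendsto (fun j => w (μ j) (κ j)) atTop (𝓝 (0:E)) := by
  classical
  set ds : ℕ → E := fun n => ((2:ℝ)⁻¹)^n • d with hds
  have hds0 : Tendsto ds atTop (𝓝 (0:E)) := by
    have h1 : Tendsto (fun n : ℕ => ((2:ℝ)⁻¹)^n) atTop (𝓝 0) :=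
      tendsto_pow_atTop_nhds_zero_of_lt_one (by norm_num) (by norm_num)
    have := h1.smul_const d
    rwa [zero_smul] at this
  have hdsnc : ∀ n, ds n ∉ closure ({0} : Set E) := by
    intro n hmem
    apply hd
    have := smul_closure_zero ((2:ℝ)^n) hmem
    rwa [hds, smul_smul, ← mul_pow, mul_inv_cancel₀ (by norm_num : (2:ℝ) ≠ 0),
      one_pow, one_smul] at this
  set A : Set E := {x | (∃ n k, x = ds n + w n k) ∧ x ∉ closure ({0} : Set E)} with hA
  have h0A : (0:E) ∈ closure A := by
    rw [mem_closure_iff]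
    intro o ho h0o
    obtain ⟨V, hV, hVadd⟩ := exists_nhds_zero_half (ho.mem_nhds h0o)
    obtain ⟨n, hn⟩ := (hds0.eventually (eventually_mem_set.mpr hV)).exists
    have hkex : ∃ k, w n k ∈ V ∧ ds n + w n k ∉ closure ({0} : Set E) := by
      by_contra hcon
      push_neg at hcon
      have hev : ∀ᶠ k in atTop, ds n + w n k ∈ closure ({0} : Set E) := by
        filter_upwards [(hw n).eventually (eventually_mem_set.mpr hV)] with k hk
        exact hcon k hk
      have hlim2 : Tendsto (w n) atTop (𝓝 (-ds n)) := by
        rw [tendsto_nhds]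
        intro U hU hmU
        filter_upwards [hev] with k hk
        have := add_mem_open_of_mem_closure_zero hk hU hmU
        rwa [neg_add_cancel_left] at this
      have := sub_mem_closure_zero_of_two_limits (w n) (hw n) hlim2
      rw [zero_sub, neg_neg] at this
      exact hdsnc n this
    obtain ⟨k, hkV, hknc⟩ := hkex
    exact ⟨ds n + w n k, hVadd _ hn _ hkV, ⟨⟨n, k, rfl⟩, hknc⟩⟩
  obtain ⟨aseq, haA, halim⟩ := mem_closure_iff_seq_limit.mp h0A
  have hex : ∀ j, ∃ n k, aseq j = ds n + w n k := fun j => (haA j).1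
  choose nf kf heq using hex
  have hanc : ∀ j, aseq j ∉ closure ({0} : Set E) := fun j => (haA j).2
  -- main claim: nf is frequently large
  have hcl : ∀ M N : ℕ, ∃ j, N ≤ j ∧ M ≤ nf j := by
    by_contra hcon
    push_neg at hcon
    obtain ⟨M, N, hMN⟩ := hcon
    have hMpos : 0 < M := by
      rcases Nat.eq_zero_or_pos M with h | h
      · exfalso; exact absurd (h ▸ (hMN N le_rfl)) (by omega)
      · exact h
    set g : ℕ → Fin M := fun i => ⟨nf (N + i), hMN (N + i) (by omega)⟩ with hg
    obtain ⟨n₀, hn₀⟩ := Finite.exists_infinite_fiber g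
    set p : ℕ → Prop := fun i => g i = n₀ with hp
    have hpinf : (setOf p).Infinite := Set.infinite_coe_iff.mp hn₀
    set idx : ℕ → ℕ := fun t => N + Nat.nth p t with hidx
    have hidxmono : StrictMono idx := fun a b hab =>
      Nat.add_lt_add_left (Nat.nth_strictMono hpinf hab) N
    have hidxtend : Tendsto idx atTop atTop := hidxmono.tendsto_atTop
    have hnfidx : ∀ t, nf (idx t) = (n₀ : ℕ) := by
      intro t
      have := Nat.nth_mem_of_infinite hpinf t
      simpa [hp, hg, Fin.ext_iff, hidx] using this
    set K : ℕ → ℕ := fun t => kf (idx t) with hK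
    have hblim : Tendsto (fun t => aseq (idx t)) atTop (𝓝 (0:E)) := halim.comp hidxtend
    by_cases hbd : ∃ B, ∀ t, K t ≤ B
    · obtain ⟨B, hB⟩ := hbd
      set g2 : ℕ → Fin (B+1) := fun t => ⟨K t, by have := hB t; omega⟩ with hg2
      obtain ⟨k₀, hk₀⟩ := Finite.exists_infinite_fiber g2
      set p2 : ℕ → Prop := fun t => g2 t = k₀ with hp2
      have hp2inf : (setOf p2).Infinite := Set.infinite_coe_iff.mp hk₀
      have hsub : Tendsto (fun i => aseq (idx (Nat.nth p2 i))) atTop (𝓝 (0:E)) :=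
        hblim.comp (Nat.nth_strictMono hp2inf).tendsto_atTop
      have hconst : ∀ i, aseq (idx (Nat.nth p2 i)) = ds (n₀ : ℕ) + w (n₀ : ℕ) (k₀ : ℕ) := by
        intro i
        have h1 := heq (idx (Nat.nth p2 i))
        have h2 : kf (idx (Nat.nth p2 i)) = (k₀ : ℕ) := by
          have := Nat.nth_mem_of_infinite hp2inf i
          simpa [hp2, hg2, Fin.ext_iff, hK] using this
        rw [h1, hnfidx, h2]
      set c : E := ds (n₀ : ℕ) + w (n₀ : ℕ) (k₀ : ℕ) with hc
      have hclim : Tendsto (fun _ : ℕ => c) atTop (𝓝 (0:E)) := by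
        have : (fun i => aseq (idx (Nat.nth p2 i))) = fun _ : ℕ => c := funext hconst
        rwa [this] at hsub
      have : c - 0 ∈ closure ({0} : Set E) :=
        sub_mem_closure_zero_of_two_limits _ tendsto_const_nhds hclim
      rw [sub_zero] at this
      have := hanc (idx (Nat.nth p2 0))
      rw [hconst 0] at this
      exact this ‹c ∈ closure ({0} : Set E)›
    · push_neg at hbd
      have h' : ∀ a, ∃ i, ∀ l ≤ a, K l < K i := by
        intro a
        obtain ⟨i, hi⟩ := hbd ((Finset.range (a+1)).sup K)
        exact ⟨i, fun l hl => lt_of_le_of_lt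
          (Finset.le_sup (Finset.mem_range.mpr (by omega))) hi⟩
      set φ : ℕ → ℕ := fun t => Nat.rec 0 (fun _ prev => (h' prev).choose) t with hφ
      have hφsucc : ∀ t, φ (t+1) = (h' (φ t)).choose := fun t => rfl
      have hφspec : ∀ t, ∀ l ≤ φ t, K l < K (φ (t+1)) := by
        intro t
        rw [hφsucc t]
        exact (h' (φ t)).choose_spec
      have hKmono : StrictMono (fun t => K (φ t)) :=
        strictMono_nat_of_lt_succ (fun t => hφspec t (φ t) le_rfl)
      have hφmono : StrictMono φ := by
        apply strictMono_nat_of_lt_succ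
        intro t
        by_contra hle
        push_neg at hle
        exact absurd (hφspec t (φ (t+1)) hle) (lt_irrefl _)
      have hwsub : Tendsto (fun t => w (n₀ : ℕ) (K (φ t))) atTop (𝓝 (0:E)) :=
        (hw (n₀ : ℕ)).comp hKmono.tendsto_atTop
      have hwsub2 : Tendsto (fun t => w (n₀ : ℕ) (K (φ t))) atTop (𝓝 (-ds (n₀ : ℕ))) := by
        have hrw : ∀ t, w (n₀ : ℕ) (K (φ t)) = aseq (idx (φ t)) - ds (n₀ : ℕ) := by
          intro t
          have h1 := heq (idx (φ t))
          rw [hnfidx] at h1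
          rw [hK, h1]
          abel
        rw [funext hrw]
        have : Tendsto (fun t => aseq (idx (φ t))) atTop (𝓝 (0:E)) :=
          hblim.comp hφmono.tendsto_atTop
        have := this.sub (tendsto_const_nhds (x := ds (n₀ : ℕ)))
        rwa [zero_sub] at this
      have := sub_mem_closure_zero_of_two_limits _ hwsub hwsub2
      rw [zero_sub, neg_neg] at this
      exact hdsnc _ this
  -- extract the diagonal
  set jj : ℕ → ℕ := fun t => Nat.rec ((hcl 0 0).choose)
    (fun _ prev => (hcl (nf prev + 1) (prev + 1)).choose) t with hjj
  have hjjsucc : ∀ t, jj (t+1) = (hcl (nf (jj t) + 1) (jj t + 1)).choose := fun t => rfl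
  have hjjspec : ∀ t, jj t + 1 ≤ jj (t+1) ∧ nf (jj t) + 1 ≤ nf (jj (t+1)) := by
    intro t
    rw [hjjsucc t]
    exact (hcl (nf (jj t) + 1) (jj t + 1)).choose_spec
  have hjjmono : StrictMono jj := strictMono_nat_of_lt_succ (fun t => (hjjspec t).1)
  have hμmono : StrictMono (fun t => nf (jj t)) :=
    strictMono_nat_of_lt_succ (fun t => (hjjspec t).2)
  refine ⟨fun t => nf (jj t), fun t => kf (jj t), hμmono, ?_⟩
  have hrw : ∀ t, w (nf (jj t)) (kf (jj t)) = aseq (jj t) - ds (nf (jj t)) := by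
    intro t
    rw [heq (jj t)]
    abel
  rw [funext hrw]
  have h1 : Tendsto (fun t => aseq (jj t)) atTop (𝓝 (0:E)) := halim.comp hjjmono.tendsto_atTop
  have h2 : Tendsto (fun t => ds (nf (jj t))) atTop (𝓝 (0:E)) := hds0.comp hμmono.tendsto_atTop
  have := h1.sub h2
  rwa [sub_zero] at this
end LemmaD
section Cover
variable {E : Type*} [AddCommGroup E] [Module ℝ E] [TopologicalSpace E]
  [IsTopologicalAddGroup E] [ContinuousSMul ℝ E]

theorem exists_cover_of_not_baire (hB : ¬ BaireSpace E) :
    ∃ C : ℕ → Set E, (∀ n, IsClosed (C n)) ∧ (∀ n, interior (C n) = ∅) ∧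
      (⋃ n, C n) = Set.univ := by
  classical
  have hB' : ¬ ∀ f : ℕ → Set E, (∀ n, IsOpen (f n)) → (∀ n, Dense (f n)) →
      Dense (⋂ n, f n) := fun h => hB ⟨h⟩
  push_neg at hB'
  obtain ⟨f, hfo, hfd, hfnd⟩ := hB'
  rw [Dense] at hfnd
  push_neg at hfnd
  obtain ⟨v₀, hv₀⟩ := hfnd
  set V : Set E := (closure (⋂ n, f n))ᶜ with hV
  have hVopen : IsOpen V := isClosed_closure.isOpen_compl
  have hv₀V : v₀ ∈ V := hv₀
  set K : ℕ → Set E := fun n => (f n)ᶜ with hK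
  have hKc : ∀ n, IsClosed (K n) := fun n => (hfo n).isClosed_compl
  have hKi : ∀ n, interior (K n) = ∅ := by
    intro n
    rw [hK, interior_compl, (hfd n).closure_eq, compl_univ]
  have hVcov : ∀ x ∈ V, ∃ n, x ∈ K n := by
    intro x hx
    by_contra hcon
    push_neg at hcon
    exact hx (subset_closure (Set.mem_iInter.mpr (fun n => not_not.mp (hcon n))))
  set q : ℕ ≃ ℕ × ℕ := (Denumerable.eqv (ℕ × ℕ)).symm with hq
  set hom : ℕ → E ≃ₜ E := fun m =>
    (Homeomorph.smulOfNeZero (((m:ℝ)+1)⁻¹) (by positivity)).trans (Homeomorph.addRight v₀)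
    with hhom
  refine ⟨fun i => (hom (q i).1) ⁻¹' (K (q i).2), fun i => ?_, fun i => ?_, ?_⟩
  · exact (hKc _).preimage (hom (q i).1).continuous
  · rw [← Homeomorph.preimage_interior, hKi, Set.preimage_empty]
  · rw [Set.eq_univ_iff_forall]
    intro x
    rw [Set.mem_iUnion]
    have hten : Tendsto (fun m : ℕ => ((m:ℝ)+1)⁻¹ • x + v₀) atTop (𝓝 v₀) := by
      have h1 : Tendsto (fun m : ℕ => ((m:ℝ)+1)⁻¹) atTop (𝓝 0) := by
        simpa [one_div] using tendsto_one_div_add_atTop_nhds_zero_nat (𝕜 := ℝ)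
      have h2 := (h1.smul_const x).add_const v₀
      rwa [zero_smul, zero_add] at h2
    obtain ⟨m, hm⟩ := (hten.eventually (hVopen.mem_nhds hv₀V)).exists
    obtain ⟨n, hn⟩ := hVcov _ hm
    refine ⟨q.symm (m, n), ?_⟩
    have hqq : q (q.symm (m, n)) = (m, n) := q.apply_symm_apply _
    rw [Set.mem_preimage, hqq]
    exact hn
end Cover

section Trivial
variable {E : Type*} [AddCommGroup E] [TopologicalSpace E] [IsTopologicalAddGroup E]

theorem baire_of_closure_zero_univ (h : closure ({0} : Set E) = Set.univ) :
    BaireSpace E := by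
  have huniv : ∀ U : Set E, IsOpen U → U.Nonempty → U = Set.univ := by
    intro U hU ⟨x, hx⟩
    rw [Set.eq_univ_iff_forall]
    intro y
    have hyx : y - x ∈ closure ({0} : Set E) := by rw [h]; trivial
    have := add_mem_open_of_mem_closure_zero hyx hU hx
    rwa [add_sub_cancel] at this
  constructor
  intro f hfo hfd
  have : ∀ n, f n = Set.univ := fun n =>
    huniv (f n) (hfo n) ((hfd n).nonempty)
  have h2 : (⋂ n, f n) = Set.univ := by
    rw [Set.eq_univ_iff_forall]
    intro x
    rw [Set.mem_iInter]
    intro n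
    rw [this n]
    trivial
  rw [h2]
  exact dense_univ
end Trivial

end Aux

set_option maxHeartbeats 1000000 in
theorem stmt13 {E : Type*} [AddCommGroup E] [Module ℝ E] [TopologicalSpace E]
    [IsTopologicalAddGroup E] [ContinuousSMul ℝ E] [FrechetUrysohnSpace E]
    (hK : PropertyK E) : BaireSpace E := by
  classical
  by_cases hcl : closure ({0} : Set E) = Set.univ
  · exact baire_of_closure_zero_univ hcl
  obtain ⟨d, hd⟩ := (Set.ne_univ_iff_exists_notMem _).mp hcl
  by_contra hB
  obtain ⟨C, hCc, hCi, hCu⟩ := exists_cover_of_not_baire hB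
  have hRn := Rst_nhds_closed C hCc hCi
  have hWs := wst_spec C hCc hCi
  have hRs := Rst_spec C hCc hCi
  obtain ⟨μ, κ, hμ, hdiag⟩ := lemmaD d hd (wst C hCc hCi) (fun m => (hWs m).1)
  -- extraction of a fast-growing subsequence
  set sI : ℕ → ℕ := fun t => Nat.rec 3 (fun _ prev => max (prev + 1)
    (max (μ prev) (κ prev) + 3)) t with hsIdef
  have hsIsucc : ∀ t, sI (t+1) = max (sI t + 1) (max (μ (sI t)) (κ (sI t)) + 3) :=
    fun t => rfl
  have hsImono : StrictMono sI := strictMono_nat_of_lt_succ (fun t => by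
    rw [hsIsucc]; omega)
  set mI : ℕ → ℕ := fun t => μ (sI t) with hmIdef
  set kI : ℕ → ℕ := fun t => κ (sI t) with hkIdef
  have hle : ∀ j, j ≤ μ j := fun j => hμ.le_apply
  have hsIsucc' : ∀ t, sI (t+1) = max (sI t + 1) (max (mI t) (kI t) + 3) :=
    fun t => rfl
  have hI1 : ∀ t, mI t + 3 ≤ mI (t+1) ∧ kI t + 3 ≤ mI (t+1) := by
    intro t
    have h1 : max (mI t) (kI t) + 3 ≤ sI (t+1) := by rw [hsIsucc']; omega
    have h2 : sI (t+1) ≤ mI (t+1) := hle _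
    have h3 := le_max_left (mI t) (kI t)
    have h4 := le_max_right (mI t) (kI t)
    constructor <;> omega
  have hImono : StrictMono mI := strictMono_nat_of_lt_succ (fun t => by
    have := (hI1 t).1; omega)
  have hI2 : ∀ t, t + 3 ≤ mI t := by
    intro t
    induction t with
    | zero =>
      have h1 : (3:ℕ) ≤ mI 0 := hle 3
      omega
    | succ t ih => have := (hI1 t).1; omega
  have hI4 : ∀ i t, i < t → mI i + 2 < mI t ∧ kI i + 2 < mI t := by
    intro i t hit
    have h1 := hI1 i
    have h2 : mI (i+1) ≤ mI t := hImono.monotone hit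
    omega
  set v : ℕ → E := fun t => wst C hCc hCi (mI t) (kI t) with hvdef
  have hv0 : Tendsto v atTop (𝓝 (0:E)) := by
    have : (fun j => wst C hCc hCi (μ j) (κ j)) ∘ sI = v := rfl
    rw [← this]
    exact hdiag.comp hsImono.tendsto_atTop
  have hvR : ∀ t, v t ∈ Rst C hCc hCi (mI t) := fun t => ((hWs (mI t)).2 (kI t)).1
  have h0R : ∀ m, (0:E) ∈ Rst C hCc hCi m := fun m => mem_of_mem_nhds (hRn m).1
  have hadd : ∀ m, ∀ x ∈ Rst C hCc hCi (m+1), ∀ y ∈ Rst C hCc hCi (m+1),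
      x + y ∈ Rst C hCc hCi m := fun m => (hRs m).1
  -- sums of extracted terms are candidate sums
  have hPhiMem : ∀ (F : Finset ℕ) (m' : ℕ), (∀ i ∈ F, mI i < m' ∧ kI i < m') →
      (∑ i ∈ F, v i) ∈ PhiOf (wst C hCc hCi) m' := by
    intro F m' hFm
    rw [PhiOf, Finset.mem_image]
    refine ⟨F.image (fun i => (mI i, kI i)), ?_, ?_⟩
    · rw [Finset.mem_powerset]
      intro ab hab
      rw [Finset.mem_image] at hab
      obtain ⟨i, hiF, hieq⟩ := hab
      rw [Finset.mem_product, Finset.mem_range, Finset.mem_range, ← hieq]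
      exact ⟨(hFm i hiF).1, (hFm i hiF).2⟩
    · rw [Finset.sum_image (fun i _ j _ hij => hImono.injective
        (congrArg Prod.fst hij))]
  -- escape property of partial sums
  have hP1 : ∀ (F : Finset ℕ) (hne : F.Nonempty), ∀ j ≤ mI (F.max' hne),
      (∑ i ∈ F, v i) ∉ C j := by
    intro F hne j hj
    have htF : F.max' hne ∈ F := F.max'_mem hne
    have hp : (∑ i ∈ F.erase (F.max' hne), v i) ∈ PhiOf (wst C hCc hCi)
        (mI (F.max' hne)) := by
      apply hPhiMem
      intro i hi
      obtain ⟨hne2, hiF⟩ := Finset.mem_erase.mp hi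
      have hit : i < F.max' hne := lt_of_le_of_ne (F.le_max' i hiF) hne2
      have := hI4 i _ hit
      constructor <;> omega
    have hesc := ((hWs (mI (F.max' hne))).2 (kI (F.max' hne))).2 j hj _ hp
    rw [← Finset.add_sum_erase F v htF]
    exact hesc
  -- robust escape
  have hP2 : ∀ (F : Finset ℕ) (hne : F.Nonempty) (j m' : ℕ), j ≤ mI (F.max' hne) →
      j ≤ m' → (∀ i ∈ F, mI i < m' ∧ kI i < m') →
      ∀ x ∈ Rst C hCc hCi (m'+1), (∑ i ∈ F, v i) + x ∉ C j := by
    intro F hne j m' hj1 hj2 hFm x hx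
    exact (hRs m').2 j hj2 _ (hPhiMem F m' hFm) (hP1 F hne j hj1) x hx
  -- apply property (K)
  obtain ⟨ψ, hψ, s₀, hsum⟩ := hK v hv0 id strictMono_id
  simp only [id] at hsum
  have hs₀ : s₀ ∈ ⋃ n, C n := by rw [hCu]; trivial
  obtain ⟨j₀, hj₀⟩ := Set.mem_iUnion.mp hs₀
  set F : Finset ℕ := (Finset.range (j₀+1)).image ψ with hFdef
  have hFne : F.Nonempty :=
    ⟨ψ 0, Finset.mem_image.mpr ⟨0, Finset.mem_range.mpr (by omega), rfl⟩⟩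
  have hψle : ∀ k, k ≤ ψ k := fun k => hψ.le_apply
  have hmax : F.max' hFne = ψ j₀ := by
    apply le_antisymm
    · apply Finset.max'_le
      intro i hi
      obtain ⟨k, hk, rfl⟩ := Finset.mem_image.mp hi
      exact hψ.monotone (by have := Finset.mem_range.mp hk; omega)
    · exact Finset.le_max' F _ (Finset.mem_image.mpr
        ⟨j₀, Finset.mem_range.mpr (by omega), rfl⟩)
  have ha3 : 3 ≤ mI (ψ (j₀+1)) := by have := hI2 (ψ (j₀+1)); omega
  have hQF : (∑ k ∈ Finset.range (j₀+1), v (ψ k)) = ∑ i ∈ F, v i :=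
    (Finset.sum_image (fun x _ y _ h => hψ.injective h)).symm
  have hcond : ∀ i ∈ F, mI i < mI (ψ (j₀+1)) - 2 ∧ kI i < mI (ψ (j₀+1)) - 2 := by
    intro i hi
    obtain ⟨k, hk, rfl⟩ := Finset.mem_image.mp hi
    have hkN : k < j₀ + 1 := Finset.mem_range.mp hk
    have h4 := hI4 (ψ k) (ψ (j₀+1)) (hψ hkN)
    omega
  have hj₀a : j₀ ≤ mI (ψ (j₀+1)) - 2 := by
    have h4 := hI4 (ψ j₀) (ψ (j₀+1)) (hψ (by omega))
    have h2 := hI2 (ψ j₀)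
    have h3 := hψle j₀
    omega
  have hj₀max : j₀ ≤ mI (F.max' hFne) := by
    rw [hmax]
    have := hI2 (ψ j₀)
    have := hψle j₀
    omega
  have hm'1 : (mI (ψ (j₀+1)) - 2) + 1 = mI (ψ (j₀+1)) - 1 := by omega
  set Q : E := ∑ i ∈ F, v i with hQdef
  have hrtail : s₀ - Q ∈ Rst C hCc hCi ((mI (ψ (j₀+1)) - 2) + 1) := by
    rw [hm'1]
    have hlim : Tendsto (fun N' => (∑ k ∈ Finset.range N', v (ψ k)) - Q) atTop
        (𝓝 (s₀ - Q)) := hsum.sub_const Q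
    apply (hRn (mI (ψ (j₀+1)) - 1)).2.mem_of_tendsto hlim
    filter_upwards [eventually_ge_atTop (j₀+1)] with N' hN'
    have hsub : Finset.range (j₀+1) ⊆ Finset.range N' := Finset.range_subset_range.mpr hN'
    show (∑ k ∈ Finset.range N', v (ψ k)) - Q ∈ Rst C hCc hCi (mI (ψ (j₀+1)) - 1)
    have hsplit : (∑ k ∈ Finset.range N', v (ψ k)) - Q
        = ∑ i ∈ (Finset.range N' \ Finset.range (j₀+1)).image ψ, v i := by
      rw [← hQF, ← Finset.sum_sdiff_eq_sub hsub]
      exact (Finset.sum_image (fun x _ y _ h => hψ.injective h)).symm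
    rw [hsplit]
    apply sum_chain h0R hadd v mI hImono hvR _ _ rfl
    intro i hi
    obtain ⟨k, hk, rfl⟩ := Finset.mem_image.mp hi
    rw [Finset.mem_sdiff, Finset.mem_range, Finset.mem_range] at hk
    have h5 : ψ (j₀+1) ≤ ψ k := hψ.monotone (by omega)
    have h6 : mI (ψ (j₀+1)) ≤ mI (ψ k) := hImono.monotone h5
    omega
  have hcontra := hP2 F hFne j₀ (mI (ψ (j₀+1)) - 2) hj₀max hj₀a hcond (s₀ - Q) hrtail
  apply hcontra
  have : Q + (s₀ - Q) = s₀ := by abel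
  rw [hQdef] at this
  rw [this]
  exact hj₀
end

section
/- Let A be an infinite set and E a dense linear subspace of ℝ^A. If E is feral (every bounded subset of E is contained in a finite-dimensional subspace), then E is not κ-Fréchet–Urysohn. -/
open Filter Topology

set_option synthInstance.maxHeartbeats 400000
set_option maxHeartbeats 1000000

open Set Module

lemma restrict_surj {A : Type*} (E : Submodule ℝ (A → ℝ)) (hdense : Dense (E : Set (A → ℝ)))
    (s : Finset A) (v : A → ℝ) : ∃ e ∈ E, ∀ x ∈ s, e x = v x := by
  classical
  let ρ : (A → ℝ) →ₗ[ℝ] ({x // x ∈ s} → ℝ) :=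
    LinearMap.funLeft ℝ ℝ (fun x : {x // x ∈ s} => (x : A))
  have hρc : Continuous ρ := continuous_pi fun x => continuous_apply _
  have hsurj : Function.Surjective ρ :=
    LinearMap.funLeft_surjective_of_injective ℝ ℝ _ Subtype.val_injective
  have hdr : ((E.map ρ : Submodule ℝ _) : Set ({x // x ∈ s} → ℝ)) = Set.univ := by
    have hd : Dense ((E.map ρ : Submodule ℝ _) : Set ({x // x ∈ s} → ℝ)) := by
      intro y
      obtain ⟨x, rfl⟩ := hsurj y
      have hx : x ∈ closure (E : Set (A → ℝ)) := by rw [hdense.closure_eq]; trivial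
      have h2 : ρ x ∈ closure (ρ '' (E : Set (A → ℝ))) :=
        image_closure_subset_closure_image hρc ⟨x, hx, rfl⟩
      simpa [Submodule.map_coe] using h2
    have : FiniteDimensional ℝ ({x // x ∈ s} → ℝ) := inferInstance
    have hclosed : IsClosed ((E.map ρ : Submodule ℝ _) : Set ({x // x ∈ s} → ℝ)) :=
      Submodule.closed_of_finiteDimensional _
    rw [← hclosed.closure_eq, hd.closure_eq]
  have hv : (fun x : {x // x ∈ s} => v x) ∈ E.map ρ := by
    rw [← SetLike.mem_coe, hdr]; trivial
  obtain ⟨e, he, hev⟩ := Submodule.mem_map.mp hv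
  refine ⟨e, he, fun x hx => ?_⟩
  have := congrFun hev ⟨x, hx⟩
  simpa [ρ, LinearMap.funLeft_apply] using this

theorem stmt16 {A : Type*} [Infinite A] (E : Submodule ℝ (A → ℝ))
    (hdense : Dense (E : Set (A → ℝ)))
    (hferal : ∀ s : Set E, Bornology.IsVonNBounded ℝ s →
      FiniteDimensional ℝ (Submodule.span ℝ s)) :
    ¬ KappaFrechetUrysohn E := by
  classical
  intro hFU
  obtain ⟨a, ha⟩ : ∃ a : ℕ → A, Function.Injective a :=
    ⟨Infinite.natEmbedding A, (Infinite.natEmbedding A).injective⟩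
  set t : ℕ → ℝ := fun n => (1/2 : ℝ) ^ (n+1) with ht_def
  have ht0 : ∀ n, 0 < t n := fun n => pow_pos (by norm_num) _
  have ht1 : ∀ n, t n < 1 := fun n => pow_lt_one₀ (by norm_num) (by norm_num) (by omega)
  have htanti : ∀ {m n : ℕ}, m ≤ n → t n ≤ t m := fun {m n} h =>
    pow_le_pow_of_le_one (by norm_num) (by norm_num) (by omega)
  set r : ℕ → ℝ := fun n => t n ^ (n+2) with hr_def
  have hr0 : ∀ n, 0 < r n := fun n => pow_pos (ht0 n) _
  set Un : ℕ → Set E := fun n =>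
    {e : E | ∀ i < n+1, |(e : A → ℝ) (a i) - t n ^ (i+1)| < r n} with hUn_def
  set U : Set E := ⋃ n, Un n with hU_def
  -- openness
  have hUnopen : ∀ n, IsOpen (Un n) := by
    intro n
    have heq : Un n = ⋂ i ∈ Finset.range (n+1),
        {e : E | |(e : A → ℝ) (a i) - t n ^ (i+1)| < r n} := by
      ext e
      simp only [hUn_def, Set.mem_setOf_eq, Set.mem_iInter, Finset.mem_range]
    rw [heq]
    refine isOpen_biInter_finset fun i _ => ?_
    have hc : Continuous fun e : E => (e : A → ℝ) (a i) :=
      (continuous_apply (a i)).comp continuous_subtype_val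
    have hb : IsOpen {x : ℝ | |x - t n ^ (i+1)| < r n} := by
      have : {x : ℝ | |x - t n ^ (i+1)| < r n} = Metric.ball (t n ^ (i+1)) (r n) := by
        ext x; simp [Metric.mem_ball, Real.dist_eq]
      rw [this]; exact Metric.isOpen_ball
    exact hb.preimage hc
  have hUopen : IsOpen U := isOpen_iUnion hUnopen
  -- 0 in closure
  have h0cl : (0 : E) ∈ closure U := by
    rw [closure_subtype]
    rw [mem_closure_iff]
    intro V hV h0V
    obtain ⟨I, w, hw, hVsub⟩ := isOpen_pi_iff.mp hV _ h0V
    have hWopen : IsOpen (⋂ x ∈ I, w x) := isOpen_biInter_finset fun x hx => (hw x hx).1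
    have h0W : (0 : ℝ) ∈ ⋂ x ∈ I, w x := by
      refine Set.mem_iInter₂.mpr fun x hx => ?_
      simpa using (hw x hx).2
    obtain ⟨ε, hε, hball⟩ := Metric.isOpen_iff.mp hWopen 0 h0W
    obtain ⟨m, hm⟩ := exists_pow_lt_of_lt_one hε (by norm_num : (1/2 : ℝ) < 1)
    have htm : t m < ε :=
      lt_of_le_of_lt (pow_le_pow_of_le_one (by norm_num) (by norm_num) (Nat.le_succ m)) hm
    set n := m
    set v : A → ℝ := fun x =>
      ∑ i ∈ Finset.range (n+1), if x = a i then t n ^ (i+1) else 0 with hv_def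
    obtain ⟨e, heE, hev⟩ :=
      restrict_surj E hdense (I ∪ Finset.image a (Finset.range (n+1))) v
    have hva : ∀ j < n+1, v (a j) = t n ^ (j+1) := by
      intro j hj
      simp only [hv_def, ha.eq_iff]
      rw [Finset.sum_ite_eq]
      simp [Finset.mem_range.mpr hj]
    have hv0 : ∀ x, x ∉ Finset.image a (Finset.range (n+1)) → v x = 0 := by
      intro x hx
      apply Finset.sum_eq_zero
      intro i hi
      rw [if_neg]
      exact fun h => hx (Finset.mem_image.mpr ⟨i, hi, h.symm⟩)
    have heUn : (⟨e, heE⟩ : E) ∈ Un n := by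
      intro i hi
      have hei : e (a i) = t n ^ (i+1) := by
        rw [hev (a i) (Finset.mem_union_right _
          (Finset.mem_image.mpr ⟨i, Finset.mem_range.mpr hi, rfl⟩)), hva i hi]
      simp only [hei]
      simpa using hr0 n
    have heV : e ∈ V := by
      apply hVsub
      intro x hx
      have hxI : x ∈ I := hx
      have hex : e x = v x := hev x (Finset.mem_union_left _ hxI)
      rw [hex]
      by_cases hxi : x ∈ Finset.image a (Finset.range (n+1))
      · obtain ⟨i, hir, rfl⟩ := Finset.mem_image.mp hxi
        rw [hva i (Finset.mem_range.mp hir)]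
        have hmem : t n ^ (i+1) ∈ Metric.ball (0 : ℝ) ε := by
          rw [Metric.mem_ball, Real.dist_eq, sub_zero, abs_of_pos (pow_pos (ht0 n) _)]
          calc t n ^ (i+1) ≤ t n ^ 1 :=
                pow_le_pow_of_le_one (ht0 n).le (ht1 n).le (by omega)
            _ = t n := pow_one _
            _ < ε := htm
        exact Set.mem_iInter₂.mp (hball hmem) _ hxI
      · rw [hv0 x hxi]
        exact Set.mem_iInter₂.mp (hball (Metric.mem_ball_self hε)) _ hxI
    refine ⟨e, heV, ⟨(⟨e, heE⟩ : E), Set.mem_iUnion.mpr ⟨n, heUn⟩, rfl⟩⟩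
  -- get sequence
  obtain ⟨u, huU, hu0⟩ := hFU U hUopen 0 h0cl
  have hb : Bornology.IsVonNBounded ℝ (Set.range u) := hu0.isVonNBounded_range ℝ
  have hFD : FiniteDimensional ℝ (Submodule.span ℝ (Set.range u)) := hferal _ hb
  set F := Submodule.span ℝ (Set.range u) with hF_def
  set d := finrank ℝ F with hd_def
  set π : E →ₗ[ℝ] (Fin (d+1) → ℝ) :=
    LinearMap.pi (fun i => (LinearMap.proj (a (i : ℕ))).comp E.subtype) with hπ_def
  have hπapp : ∀ (e : E) (i : Fin (d+1)), π e i = (e : A → ℝ) (a (i : ℕ)) := by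
    intro e i; simp [hπ_def]
  have hπlt : Submodule.map π F < ⊤ := by
    rw [lt_top_iff_ne_top]
    intro h
    have h1 : finrank ℝ (Submodule.map π F) ≤ d := Submodule.finrank_map_le π F
    rw [h, finrank_top, Module.finrank_fin_fun] at h1
    omega
  obtain ⟨f, hf0, hfbot⟩ := Submodule.exists_dual_map_eq_bot_of_lt_top hπlt inferInstance
  have hvan : ∀ k, f (π (u k)) = 0 := by
    intro k
    have h1 : π (u k) ∈ Submodule.map π F :=
      Submodule.mem_map_of_mem (Submodule.subset_span (Set.mem_range_self k))
    have h2 : f (π (u k)) ∈ Submodule.map f (Submodule.map π F) := Submodule.mem_map_of_mem h1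
    rw [hfbot] at h2
    exact (Submodule.mem_bot ℝ).mp h2
  set c : Fin (d+1) → ℝ := fun i => f (fun j => if i = j then 1 else 0) with hc_def
  have hexp : ∀ x : Fin (d+1) → ℝ, f x = ∑ i, x i * c i := by
    intro x
    rw [LinearMap.pi_apply_eq_sum_univ f x]
    simp [hc_def, smul_eq_mul]
  have hcne : ∃ i, c i ≠ 0 := by
    by_contra h
    push_neg at h
    apply hf0
    apply LinearMap.ext
    intro x
    rw [hexp]
    simp [h]
  set C : ℝ := ∑ i, |c i| with hC_def
  have hPex : ∃ m, ∃ h : m < d+1, c ⟨m, h⟩ ≠ 0 := by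
    obtain ⟨i, hi⟩ := hcne
    exact ⟨(i : ℕ), i.isLt, by simpa using hi⟩
  set j₀ := Nat.find hPex with hj0_def
  obtain ⟨hj₀lt, hcj⟩ := Nat.find_spec hPex
  set j : Fin (d+1) := ⟨j₀, hj₀lt⟩ with hj_def
  have hcjne : c j ≠ 0 := hcj
  have hcmin : ∀ i : Fin (d+1), (i : ℕ) < j₀ → c i = 0 := by
    intro i hi
    by_contra h
    exact Nat.find_min hPex hi ⟨i.isLt, by simpa using h⟩
  have hCj : 0 < |c j| := abs_pos.mpr hcjne
  have hCjle : |c j| ≤ C := Finset.single_le_sum (fun i _ => abs_nonneg (c i)) (Finset.mem_univ j)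
  have hCpos : 0 < C := lt_of_lt_of_le hCj hCjle
  have hj₀d : j₀ ≤ d := by omega
  -- choice of indices
  choose nn hnn using fun k => Set.mem_iUnion.mp (huU k)
  have hcoord : ∀ i : ℕ, Tendsto (fun k => (u k : A → ℝ) (a i)) atTop (𝓝 0) := by
    intro i
    have hc2 : Continuous fun e : E => (e : A → ℝ) (a i) :=
      (continuous_apply (a i)).comp continuous_subtype_val
    have := (hc2.tendsto 0).comp hu0
    simpa [Function.comp_def] using this
  have hunb : ∀ N, ∃ k, N ≤ nn k := by
    by_contra h
    push_neg at h
    obtain ⟨N, hN⟩ := h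
    set g : ℕ → Fin N := fun k => ⟨nn k, hN k⟩ with hg_def
    obtain ⟨y, hy⟩ := Finite.exists_infinite_fiber g
    set n₀ := (y : ℕ) with hn₀
    have hinf : {k | nn k = n₀}.Infinite := by
      have : g ⁻¹' {y} = {k | nn k = n₀} := by
        ext k
        simp [hg_def, Fin.ext_iff, hn₀]
      rw [← this]
      exact Set.infinite_coe_iff.mp hy
    have hδ : 0 < t n₀ ^ (n₀+1) - r n₀ := by
      have : r n₀ < t n₀ ^ (n₀+1) :=
        pow_lt_pow_right_of_lt_one₀ (ht0 n₀) (ht1 n₀) (by omega)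
      linarith
    have hev : ∀ᶠ k in atTop, |(u k : A → ℝ) (a n₀)| < t n₀ ^ (n₀+1) - r n₀ := by
      have hball := (hcoord n₀).eventually (Metric.ball_mem_nhds (0 : ℝ) hδ)
      filter_upwards [hball] with k hk
      simpa [Real.dist_eq] using hk
    rw [eventually_atTop] at hev
    obtain ⟨K, hK⟩ := hev
    obtain ⟨k, hk1, hk2⟩ := hinf.exists_gt K
    have h1 := hnn k
    have hk1' : nn k = n₀ := hk1
    rw [hk1'] at h1
    have h2 := h1 n₀ (by omega)
    have h3 := hK k hk2.le
    have h4 := abs_sub_abs_le_abs_sub (t n₀ ^ (n₀+1)) ((u k : A → ℝ) (a n₀))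
    rw [abs_of_pos (pow_pos (ht0 n₀) _)] at h4
    have h2' : |t n₀ ^ (n₀+1) - (u k : A → ℝ) (a n₀)| < r n₀ := by
      rw [abs_sub_comm]; exact h2
    linarith
  -- final contradiction
  obtain ⟨m, hm⟩ := exists_pow_lt_of_lt_one (div_pos hCj (by linarith : (0:ℝ) < 2*C))
    (by norm_num : (1/2 : ℝ) < 1)
  obtain ⟨k, hk⟩ := hunb (max m (d+1))
  set n := nn k with hn_def
  have hnd : d + 1 ≤ n := le_trans (le_max_right _ _) hk
  have htn : t n < |c j| / (2*C) := by
    calc t n ≤ t (max m (d+1)) := htanti hk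
      _ ≤ (1/2 : ℝ) ^ m :=
        pow_le_pow_of_le_one (by norm_num) (by norm_num) (by omega)
      _ < _ := hm
  have hx := hnn k
  have hxi : ∀ i : Fin (d+1), |π (u k) i - t n ^ ((i : ℕ)+1)| < r n := by
    intro i
    rw [hπapp]
    exact hx (i : ℕ) (by omega)
  have h0 : ∑ i, π (u k) i * c i = 0 := by rw [← hexp]; exact hvan k
  have hsplit : ∑ i, π (u k) i * c i
      = (∑ i, (π (u k) i - t n ^ ((i : ℕ)+1)) * c i)
        + ((∑ i ∈ Finset.univ.erase j, t n ^ ((i : ℕ)+1) * c i) + t n ^ (j₀+1) * c j) := by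
    rw [Finset.sum_erase_add _ _ (Finset.mem_univ j)]
    rw [← Finset.sum_add_distrib]
    apply Finset.sum_congr rfl
    intro i _
    ring
  have hD : |∑ i, (π (u k) i - t n ^ ((i : ℕ)+1)) * c i| ≤ r n * C := by
    calc |∑ i, (π (u k) i - t n ^ ((i : ℕ)+1)) * c i|
        ≤ ∑ i, |(π (u k) i - t n ^ ((i : ℕ)+1)) * c i| := Finset.abs_sum_le_sum_abs _ _
      _ ≤ ∑ i, r n * |c i| := by
          apply Finset.sum_le_sum
          intro i _
          rw [abs_mul]
          exact mul_le_mul_of_nonneg_right (hxi i).le (abs_nonneg _)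
      _ = r n * C := by rw [hC_def, Finset.mul_sum]
  have hS : |∑ i ∈ Finset.univ.erase j, t n ^ ((i : ℕ)+1) * c i| ≤ t n ^ (j₀+2) * C := by
    calc |∑ i ∈ Finset.univ.erase j, t n ^ ((i : ℕ)+1) * c i|
        ≤ ∑ i ∈ Finset.univ.erase j, |t n ^ ((i : ℕ)+1) * c i| := Finset.abs_sum_le_sum_abs _ _
      _ ≤ ∑ i ∈ Finset.univ.erase j, t n ^ (j₀+2) * |c i| := by
          apply Finset.sum_le_sum
          intro i hi
          rw [abs_mul, abs_of_pos (pow_pos (ht0 n) _)]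
          rcases lt_or_gt_of_ne (fun hji : (i : ℕ) = j₀ =>
            (Finset.mem_erase.mp hi).1 (Fin.ext hji)) with hlt | hgt
          · rw [hcmin i hlt]
            simp
          · exact mul_le_mul_of_nonneg_right
              (pow_le_pow_of_le_one (ht0 n).le (ht1 n).le (by omega)) (abs_nonneg _)
      _ ≤ ∑ i, t n ^ (j₀+2) * |c i| := by
          apply Finset.sum_le_sum_of_subset_of_nonneg (Finset.erase_subset _ _)
          intro i _ _
          positivity
      _ = t n ^ (j₀+2) * C := by rw [hC_def, Finset.mul_sum]
  have hrle : r n ≤ t n ^ (j₀+2) :=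
    pow_le_pow_of_le_one (ht0 n).le (ht1 n).le (by omega)
  have hkey : t n ^ (j₀+1) * |c j| ≤ 2 * (t n ^ (j₀+2) * C) := by
    have h5 : t n ^ (j₀+1) * c j
        = -((∑ i, (π (u k) i - t n ^ ((i : ℕ)+1)) * c i)
            + ∑ i ∈ Finset.univ.erase j, t n ^ ((i : ℕ)+1) * c i) := by
      rw [hsplit] at h0
      linarith
    have h6 : |t n ^ (j₀+1) * c j| ≤ r n * C + t n ^ (j₀+2) * C := by
      rw [h5, abs_neg]
      calc |(∑ i, (π (u k) i - t n ^ ((i : ℕ)+1)) * c i)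
            + ∑ i ∈ Finset.univ.erase j, t n ^ ((i : ℕ)+1) * c i|
          ≤ _ + _ := abs_add_le _ _
        _ ≤ r n * C + t n ^ (j₀+2) * C := add_le_add hD hS
    rw [abs_mul, abs_of_pos (pow_pos (ht0 n) _)] at h6
    nlinarith [mul_le_mul_of_nonneg_right hrle hCpos.le]
  have hfin : |c j| ≤ 2 * C * t n := by
    have hpos : 0 < t n ^ (j₀+1) := pow_pos (ht0 n) _
    have : t n ^ (j₀+2) = t n ^ (j₀+1) * t n := by ring
    rw [this] at hkey
    have h7 : t n ^ (j₀+1) * |c j| ≤ t n ^ (j₀+1) * (2 * C * t n) := by nlinarith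
    exact le_of_mul_le_mul_left h7 hpos
  have : 2 * C * t n < |c j| := by
    have h8 := (lt_div_iff₀ (by linarith : (0:ℝ) < 2*C)).mp htn
    linarith
  linarith
end

section
/- Every κ-Fréchet–Urysohn locally convex space E is b-Baire-like: for every increasing sequence (A_n) of closed, absolutely convex, bornivorous subsets of E whose union is E, some A_n is a neighborhood of 0. -/
open Filter Topology Pointwise

section AuxGrp

variable {E : Type*} [AddCommGroup E] [TopologicalSpace E] [IsTopologicalAddGroup E]

lemma aux_spec {x : E} (h : (0:E) ∈ closure ({x} : Set E)) : x ∈ closure ({0} : Set E) := by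
  rw [mem_closure_iff] at h ⊢
  intro u hu hxu
  have ho : IsOpen ((fun y : E => x - y) ⁻¹' u) := hu.preimage (continuous_const.sub continuous_id)
  have h0 : (0:E) ∈ (fun y : E => x - y) ⁻¹' u := by simpa using hxu
  obtain ⟨p, hpu, hpx⟩ := h _ ho h0
  rcases hpx with rfl
  refine ⟨0, ?_, rfl⟩
  simpa using hpu

lemma aux_symm {U : Set E} (hU : U ∈ 𝓝 (0:E)) :
    ∃ V : Set E, IsOpen V ∧ (0:E) ∈ V ∧ (∀ y ∈ V, -y ∈ V) ∧
      ∀ y ∈ V, ∀ z ∈ V, y + z ∈ U := by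
  obtain ⟨V₁, hV₁o, hV₁0, hV₁U⟩ := exists_open_nhds_zero_add_subset hU
  refine ⟨V₁ ∩ (fun y : E => -y) ⁻¹' V₁, hV₁o.inter (hV₁o.preimage continuous_neg),
    ⟨hV₁0, by simpa⟩, ?_, ?_⟩
  · rintro y ⟨h1, h2⟩
    exact ⟨h2, by simpa⟩
  · rintro y ⟨h1, -⟩ z ⟨h2, -⟩
    exact hV₁U (Set.add_mem_add h1 h2)

lemma aux_sep {x : E} (hx : x ∉ closure ({0} : Set E)) :
    ∃ V : Set E, IsOpen V ∧ (0:E) ∈ V ∧ x ∉ closure V ∧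
      (0:E) ∉ closure {y : E | y - x ∈ V} := by
  have h0x : (0:E) ∉ closure ({x} : Set E) := fun h => hx (aux_spec h)
  rw [mem_closure_iff] at h0x
  push_neg at h0x
  obtain ⟨W₀, hW₀o, hW₀0, hW₀x⟩ := h0x
  have hxW₀ : x ∉ W₀ := fun h => (by simpa using hW₀x : x ∉ W₀) h
  obtain ⟨V, hVo, hV0, hVsym, hVadd⟩ := aux_symm (hW₀o.mem_nhds hW₀0)
  have key : ∀ p, p ∈ V → p - x ∈ V → False := by
    intro p hp hpx
    have : p + -(p - x) ∈ W₀ := hVadd p hp _ (hVsym _ hpx)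
    rw [← sub_eq_add_neg, sub_sub_cancel] at this
    exact hxW₀ this
  refine ⟨V, hVo, hV0, ?_, ?_⟩
  · intro hcl
    have hN : (fun y : E => y - x) ⁻¹' V ∈ 𝓝 x := by
      refine (hVo.preimage (continuous_id.sub continuous_const)).mem_nhds ?_
      simpa using hV0
    obtain ⟨p, hpN, hpV⟩ := mem_closure_iff_nhds.mp hcl _ hN
    exact key p hpV hpN
  · intro hcl
    obtain ⟨p, hpV, hpS⟩ := mem_closure_iff_nhds.mp hcl V (hVo.mem_nhds hV0)
    exact key p hpV hpS

end AuxGrp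


theorem stmt17 {E : Type*} [AddCommGroup E] [Module ℝ E] [TopologicalSpace E]
    [IsTopologicalAddGroup E] [ContinuousSMul ℝ E] [LocallyConvexSpace ℝ E]
    (hκ : KappaFrechetUrysohn E)
    (A : ℕ → Set E) (hmono : Monotone A)
    (hclosed : ∀ n, IsClosed (A n)) (hconv : ∀ n, Convex ℝ (A n))
    (hbal : ∀ n, Balanced ℝ (A n))
    (hborn : ∀ n, ∀ B : Set E, Bornology.IsVonNBounded ℝ B → ∃ m : ℕ, B ⊆ (m : ℝ) • (A n))
    (hcover : ⋃ n, A n = Set.univ) :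
    ∃ n, A n ∈ 𝓝 (0 : E) := by
  by_contra hcon
  push_neg at hcon
  -- 0 belongs to every A n
  have hA0 : ∀ n, (0:E) ∈ A n := by
    intro n
    obtain ⟨m, hm⟩ := hborn n {0} (Bornology.isVonNBounded_singleton 0)
    obtain ⟨a, ha, -⟩ := hm rfl
    have h1 : (0:ℝ) • a ∈ (0:ℝ) • A n := Set.smul_mem_smul_set ha
    have h2 : (0:ℝ) • A n ⊆ A n := hbal n 0 (by simp)
    simpa using h2 h1
  set c : ℕ → ℝ := fun n => (n:ℝ) + 1 with hcdef
  have hcpos : ∀ n, (0:ℝ) < c n := fun n => by positivity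
  set D : ℕ → Set E := fun n => c n • A n with hDdef
  have hDclosed : ∀ n, IsClosed (D n) := fun n => (hclosed n).smul_of_ne_zero (hcpos n).ne'
  have hD0 : ∀ n, (0:E) ∈ D n := by
    intro n
    have := Set.smul_mem_smul_set (a := c n) (hA0 n)
    simpa using this
  have hnorm : ∀ {s t : ℝ}, 0 ≤ s → s ≤ t → ‖s‖ ≤ ‖t‖ := by
    intro s t hs hst
    rw [Real.norm_eq_abs, Real.norm_eq_abs, abs_of_nonneg hs, abs_of_nonneg (hs.trans hst)]
    exact hst
  have hDmono : ∀ {n m : ℕ}, n ≤ m → D n ⊆ D m := by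
    intro n m h
    calc c n • A n ⊆ c n • A m := Set.smul_set_mono (hmono h)
      _ ⊆ c m • A m := (hbal m).smul_mono (hnorm (hcpos n).le (by
          simp only [hcdef]
          exact_mod_cast add_le_add_left (Nat.cast_le.mpr h) 1))
  have hDnn : ∀ n, D n ∉ 𝓝 (0:E) := by
    intro n hn
    apply hcon n
    have hpre : A n = (fun y : E => c n • y) ⁻¹' (D n) := by
      ext y
      constructor
      · intro hy
        exact Set.smul_mem_smul_set hy
      · rintro ⟨a, ha, hay⟩
        have : a = y := by
          have := congrArg (fun z : E => (c n)⁻¹ • z) hay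
          simpa [smul_smul, inv_mul_cancel₀ (hcpos n).ne'] using this
        rwa [← this]
    rw [hpre]
    refine (continuous_const_smul (c n)).continuousAt.preimage_mem_nhds ?_
    simpa using hn
  have hDabs : ∀ B : Set E, Bornology.IsVonNBounded ℝ B → ∃ m, B ⊆ D m := by
    intro B hB
    obtain ⟨m, hm⟩ := hborn 0 B hB
    refine ⟨m, hm.trans ?_⟩
    calc (m:ℝ) • A 0 ⊆ (m:ℝ) • A m := Set.smul_set_mono (hmono (Nat.zero_le m))
      _ ⊆ c m • A m := (hbal m).smul_mono (hnorm (Nat.cast_nonneg m) (by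
          simp [hcdef]))
  have hclz : ∀ n, closure ({0} : Set E) ⊆ D n := fun n =>
    closure_minimal (Set.singleton_subset_iff.2 (hD0 n)) (hDclosed n)
  -- the open sets G n
  set G : ℕ → Set E := fun n =>
    ⋃₀ {O : Set E | IsOpen O ∧ (0:E) ∉ closure O ∧ O ∩ D n = ∅} with hGdef
  have hGopen : ∀ n, IsOpen (G n) := fun n => isOpen_sUnion (fun O hO => hO.1)
  have hGD : ∀ n, ∀ y ∈ G n, y ∉ D n := by
    rintro n y ⟨O, ⟨hOo, hOc, hOD⟩, hyO⟩ hyD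
    exact Set.eq_empty_iff_forall_notMem.mp hOD y ⟨hyO, hyD⟩
  have hGcl : ∀ n, (0:E) ∈ closure (G n) := by
    intro n
    rw [mem_closure_iff_nhds]
    intro N hN
    have hns : ¬ N ⊆ D n := fun h => hDnn n (Filter.mem_of_superset hN h)
    obtain ⟨x, hxN, hxD⟩ := Set.not_subset.mp hns
    have hx0 : x ∉ closure ({0} : Set E) := fun h => hxD (hclz n h)
    obtain ⟨V, hVo, hV0, hVx, hVset⟩ := aux_sep hx0
    refine ⟨x, hxN, ?_⟩
    refine ⟨{y : E | y - x ∈ V} ∩ (D n)ᶜ, ⟨?_, ?_, ?_⟩, ⟨by simpa using hV0, hxD⟩⟩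
    · exact (hVo.preimage (continuous_id.sub continuous_const)).inter (hDclosed n).isOpen_compl
    · intro h
      exact hVset (closure_mono Set.inter_subset_left h)
    · ext y
      simp only [Set.mem_inter_iff, Set.mem_compl_iff, Set.mem_empty_iff_false, iff_false]
      rintro ⟨⟨-, h2⟩, h3⟩
      exact h2 h3
  -- the initial null sequence
  obtain ⟨a, haG, ha0⟩ := hκ (G 0) (hGopen 0) 0 (hGcl 0)
  have haz : ∀ k, a k ∉ closure ({0} : Set E) := fun k h => hGD 0 _ (haG k) (hclz 0 h)
  choose W hWo hW0 hWa hWdummy using fun k => aux_sep (haz k)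
  set P : ℕ → Set E := fun k => (fun y : E => y + a k) ⁻¹' (G k ∩ W k) with hPdef
  have hPopen : ∀ k, IsOpen (P k) :=
    fun k => ((hGopen k).inter (hWo k)).preimage (continuous_add_right (a k))
  have hPcl : ∀ k, (0:E) ∉ closure (P k) := by
    intro k h
    apply hWa k
    rw [mem_closure_iff_nhds]
    intro N hN
    have hM : (fun y : E => y + a k) ⁻¹' N ∈ 𝓝 (0:E) := by
      refine (continuous_add_right (a k)).continuousAt.preimage_mem_nhds ?_
      simpa using hN
    obtain ⟨p, hpM, hpP⟩ := mem_closure_iff_nhds.mp h _ hM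
    exact ⟨p + a k, hpM, hpP.2⟩
  set H : Set E := ⋃ k, P k with hHdef
  have hHopen : IsOpen H := isOpen_iUnion hPopen
  have hHcl : (0:E) ∈ closure H := by
    rw [mem_closure_iff_nhds]
    intro N hN
    obtain ⟨V, hVo, hV0, hVsym, hVadd⟩ := aux_symm hN
    have hev : ∀ᶠ i in atTop, a i ∈ V := ha0 (hVo.mem_nhds hV0)
    obtain ⟨k, hk⟩ := hev.exists
    have hN' : V ∩ W k ∈ 𝓝 (0:E) :=
      Filter.inter_mem (hVo.mem_nhds hV0) ((hWo k).mem_nhds (hW0 k))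
    obtain ⟨g, ⟨hgV, hgW⟩, hgG⟩ := mem_closure_iff_nhds.mp (hGcl k) _ hN'
    refine ⟨g - a k, ?_, ?_⟩
    · have : g + -a k ∈ N := hVadd g hgV _ (hVsym _ hk)
      simpa [sub_eq_add_neg] using this
    · refine Set.mem_iUnion.mpr ⟨k, ?_⟩
      show (g - a k) + a k ∈ G k ∩ W k
      rw [sub_add_cancel]
      exact ⟨hgG, hgW⟩
  -- the final sequence
  obtain ⟨w, hwH, hw0⟩ := hκ H hHopen 0 hHcl
  choose k hk using fun j => Set.mem_iUnion.mp (hwH j)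
  have hfib : ∀ m, {j | k j = m}.Finite := by
    intro m
    by_contra hinf
    have hfreq : ∃ᶠ j in atTop, w j ∈ P m := by
      rw [← Nat.cofinite_eq_atTop]
      refine (Filter.frequently_cofinite_iff_infinite.mpr hinf).mono ?_
      intro j hj
      rw [← hj]
      exact hk j
    exact hPcl m (mem_closure_of_frequently_of_tendsto hfreq hw0)
  have hktop : Tendsto k atTop atTop := by
    rw [tendsto_atTop]
    intro b
    rw [← Nat.cofinite_eq_atTop, Filter.eventually_cofinite]
    refine Set.Finite.subset (Set.Finite.biUnion (Set.finite_Iio b) (fun m _ => hfib m)) ?_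
    intro j hj
    simp only [Set.mem_iUnion, Set.mem_setOf_eq]
    exact ⟨k j, lt_of_not_ge hj, rfl⟩
  set g : ℕ → E := fun j => w j + a (k j) with hgdef
  have hg0 : Tendsto g atTop (𝓝 (0:E)) := by
    have := hw0.add (ha0.comp hktop)
    simpa using this
  have hgG : ∀ j, g j ∈ G (k j) := fun j => (hk j).1
  have hbd : Bornology.IsVonNBounded ℝ (Set.range g) := hg0.isVonNBounded_range ℝ
  obtain ⟨m, hm⟩ := hDabs _ hbd
  obtain ⟨j, hj⟩ := (tendsto_atTop.mp hktop m).exists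
  exact hGD (k j) _ (hgG j) (hDmono hj (hm (Set.mem_range_self j)))
end

section
/- Let E be a κ-Fréchet–Urysohn locally convex space. If for every increasing sequence (A_n) of closed absolutely convex subsets of E covering E, the closures of A_n in the completion of E cover the completion, then E is Baire-like: for every such sequence (A_n), some A_n is a neighborhood of 0. -/
open Filter Topology Set Pointwise UniformSpace

section Infra

variable {E : Type*} [AddCommGroup E] [Module ℝ E] [UniformSpace E]
    [IsUniformAddGroup E] [ContinuousSMul ℝ E] [LocallyConvexSpace ℝ E]

noncomputable instance : UniformContinuousConstSMul ℝ E :=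
  uniformContinuousConstSMul_of_continuousConstSMul ℝ E

set_option linter.unusedSectionVars false

/-- the coercion as a linear map -/
noncomputable def coeL : E →ₗ[ℝ] Completion E where
  toFun := ((↑) : E → Completion E)
  map_add' := Completion.coe_add
  map_smul' := Completion.coe_smul

lemma open_subset_closure_image_preimage {T : Set (Completion E)} (hT : IsOpen T) :
    T ⊆ closure (((↑) : E → Completion E) '' (((↑) : E → Completion E) ⁻¹' T)) := by
  intro t ht
  rw [mem_closure_iff_nhds]
  intro N hN
  have h1 : IsOpen (interior N ∩ T) := isOpen_interior.inter hT
  have h2 : (interior N ∩ T).Nonempty := ⟨t, mem_interior_iff_mem_nhds.2 hN, ht⟩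
  obtain ⟨z, ⟨hz1, hz2⟩, e, rfl⟩ := Completion.denseRange_coe.inter_open_nonempty _ h1 h2
  exact ⟨(e : Completion E), interior_subset hz1, mem_image_of_mem _ hz2⟩

lemma closure_image_mem_nhds {V : Set E} (hV : V ∈ 𝓝 (0 : E)) :
    closure (((↑) : E → Completion E) '' V) ∈ 𝓝 (0 : Completion E) := by
  rw [(Completion.isDenseInducing_coe (α := E)).isInducing.nhds_eq_comap,
      Completion.coe_zero] at hV
  obtain ⟨T, hT, hTV⟩ := hV
  refine mem_of_superset (interior_mem_nhds.2 hT) ?_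
  refine (open_subset_closure_image_preimage isOpen_interior).trans (closure_mono ?_)
  exact image_mono ((preimage_mono interior_subset).trans hTV)

/-- Basis of closures of images of convex neighborhoods. -/
lemma completion_nhds_basis {S : Set (Completion E)} (hS : S ∈ 𝓝 (0 : Completion E)) :
    ∃ V : Set E, V ∈ 𝓝 (0 : E) ∧ Convex ℝ V ∧
      closure (((↑) : E → Completion E) '' V) ⊆ S ∧
      closure (((↑) : E → Completion E) '' V) ∈ 𝓝 (0 : Completion E) := by
  obtain ⟨M, ⟨hM1, hM2⟩, hMS⟩ := (closed_nhds_basis (0 : Completion E)).mem_iff.1 hS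
  have hN : interior M ∈ 𝓝 (0 : Completion E) := interior_mem_nhds.2 hM1
  have hV0 : ((↑) : E → Completion E) ⁻¹' interior M ∈ 𝓝 (0 : E) := by
    have := (Completion.continuous_coe E).continuousAt (x := (0 : E))
    rw [ContinuousAt, Completion.coe_zero] at this
    exact this hN
  obtain ⟨V, hV, hVc, hVsub⟩ :=
    (locallyConvexSpace_iff_exists_convex_subset_zero ℝ E).1 ‹_› _ hV0
  refine ⟨V, hV, hVc, ?_, closure_image_mem_nhds hV⟩
  have h1 : closure (((↑) : E → Completion E) '' V) ⊆ closure (interior M) :=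
    closure_mono ((image_mono hVsub).trans (image_preimage_subset _ _))
  have h2 : closure (interior M) ⊆ M := by
    calc closure (interior M) ⊆ closure M := closure_mono interior_subset
      _ = M := hM2.closure_eq
  exact h1.trans (h2.trans hMS)

lemma balanced_image {W : Set E} (hW : Balanced ℝ W) :
    Balanced ℝ (((↑) : E → Completion E) '' W) := by
  intro a ha
  have : ((↑) : E → Completion E) '' W = (coeL : E →ₗ[ℝ] Completion E) '' W := rfl
  rw [this, ← image_smul_set (coeL (E := E)) a W]
  exact image_mono (hW a ha)

/-- Balanced version of the basis. -/
lemma completion_nhds_basis_balanced {S : Set (Completion E)} (hS : S ∈ 𝓝 (0 : Completion E)) :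
    ∃ C : Set (Completion E), Balanced ℝ C ∧ C ⊆ S ∧ C ∈ 𝓝 (0 : Completion E) := by
  obtain ⟨V, hV, _, hsub, _⟩ := completion_nhds_basis hS
  refine ⟨closure (((↑) : E → Completion E) '' (balancedCore ℝ V)),
    ?_, ?_, closure_image_mem_nhds (balancedCore_mem_nhds_zero hV)⟩
  · intro a ha
    have h1 : a • closure (((↑) : E → Completion E) '' (balancedCore ℝ V)) ⊆
        closure (a • (((↑) : E → Completion E) '' (balancedCore ℝ V))) := by
      rw [← Set.image_smul, ← Set.image_smul]
      exact image_closure_subset_closure_image (continuous_const_smul a)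
    exact h1.trans (closure_mono (balanced_image (balancedCore_balanced _) a ha))
  exact (closure_mono (image_mono (balancedCore_subset _))).trans hsub

noncomputable instance : LocallyConvexSpace ℝ (Completion E) := by
  refine (locallyConvexSpace_iff_exists_convex_subset_zero ℝ _).2 fun S hS => ?_
  obtain ⟨V, hV, hVc, hsub, hmem⟩ := completion_nhds_basis hS
  exact ⟨closure (((↑) : E → Completion E) '' V), hmem,
    ((hVc.linear_image coeL).closure), hsub⟩

noncomputable instance : ContinuousSMul ℝ (Completion E) := by
  apply ContinuousSMul.of_nhds_zero
  · -- joint at (0,0)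
    rw [tendsto_def]
    intro S hS
    obtain ⟨C, hCbal, hCS, hCmem⟩ := completion_nhds_basis_balanced hS
    have hmem : (Metric.closedBall (0:ℝ) 1) ×ˢ C ∈ (𝓝 (0:ℝ)) ×ˢ (𝓝 (0 : Completion E)) :=
      prod_mem_prod (Metric.closedBall_mem_nhds _ one_pos) hCmem
    refine mem_of_superset hmem ?_
    rintro ⟨r, x⟩ ⟨hr, hx⟩
    exact hCS (hCbal r (by simpa using hr) ⟨x, hx, rfl⟩)
  · -- scalar slot
    intro x₀
    rw [tendsto_def]
    intro S hS
    obtain ⟨S₁, hS₁, hhalf⟩ := exists_nhds_zero_half hS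
    obtain ⟨C, hCbal, hCS, hCmem⟩ := completion_nhds_basis_balanced hS₁
    have h0C : (0 : Completion E) ∈ C := mem_of_mem_nhds hCmem
    have hT : (fun y => x₀ - y) ⁻¹' C ∈ 𝓝 x₀ := by
      have hc : ContinuousAt (fun y : Completion E => x₀ - y) x₀ :=
        (continuous_const.sub continuous_id).continuousAt
      apply hc.preimage_mem_nhds
      simpa using hCmem
    obtain ⟨z, hz1, e, rfl⟩ := mem_closure_iff_nhds.1
      (Completion.denseRange_coe x₀) _ hT
    -- x₀ - ↑e ∈ C
    have hcoe : Tendsto (fun r : ℝ => ((r • e : E) : Completion E)) (𝓝 0) (𝓝 0) := by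
      have h1 : Tendsto (fun r : ℝ => (r • e : E)) (𝓝 0) (𝓝 0) := by
        have hcs : Continuous fun r : ℝ => r • e := continuous_id.smul (continuous_const (y := e))
        have := hcs.tendsto (0:ℝ)
        simpa only [zero_smul] using this
      have h2 := ((Completion.continuous_coe E).tendsto (0 : E))
      rw [Completion.coe_zero] at h2
      exact h2.comp h1
    have hev : ∀ᶠ r : ℝ in 𝓝 0, ((r • e : E) : Completion E) ∈ S₁ := hcoe hS₁
    have hball : ∀ᶠ r : ℝ in 𝓝 0, r ∈ Metric.closedBall (0:ℝ) 1 :=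
      Metric.closedBall_mem_nhds _ one_pos
    filter_upwards [hev, hball] with r h1 h2
    have hmem1 : r • (x₀ - (e : Completion E)) ∈ C :=
      hCbal r (by simpa using h2) ⟨_, hz1, rfl⟩
    have : r • x₀ = r • (x₀ - (e : Completion E)) + ((r • e : E) : Completion E) := by
      rw [Completion.coe_smul, smul_sub]; abel
    rw [mem_preimage, this]
    exact hhalf _ (hCS hmem1) _ h1
  · intro a
    have := (continuous_const_smul a).tendsto (0 : Completion E)
    simpa using this

end Infra

section Infra2

variable {E : Type*} [AddCommGroup E] [Module ℝ E] [UniformSpace E]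
    [IsUniformAddGroup E] [ContinuousSMul ℝ E] [LocallyConvexSpace ℝ E]

set_option linter.unusedSectionVars false

lemma kfu_completion
    (hκ : ∀ U : Set E, IsOpen U → ∀ x ∈ closure U,
      ∃ u : ℕ → E, (∀ n, u n ∈ U) ∧ Tendsto u atTop (𝓝 x)) :
    ∀ U : Set (Completion E), IsOpen U → ∀ x ∈ closure U,
      ∃ u : ℕ → Completion E, (∀ n, u n ∈ U) ∧ Tendsto u atTop (𝓝 x) := by
  intro U hU x hx
  set Uc : Set (Completion E) := (· + x) ⁻¹' U with hUcdef
  have hUcopen : IsOpen Uc := hU.preimage (continuous_id.add continuous_const)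
  have hcl : closure Uc = (· + x) ⁻¹' closure U := by
    simpa [hUcdef] using ((Homeomorph.addRight x).preimage_closure U).symm
  have h0Uc : (0 : Completion E) ∈ closure Uc := by
    rw [hcl]; simpa using hx
  set V : Set E := ((↑) : E → Completion E) ⁻¹' Uc with hVdef
  have hVopen : IsOpen V := hUcopen.preimage (Completion.continuous_coe E)
  have h0V : (0 : E) ∈ closure V := by
    rw [mem_closure_iff_nhds]
    intro N hN
    have hN' : N ∈ comap ((↑) : E → Completion E) (𝓝 (0 : Completion E)) := by
      rw [← Completion.coe_zero,
        ← (Completion.isDenseInducing_coe (α := E)).isInducing.nhds_eq_comap]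
      exact hN
    obtain ⟨T, hT, hTN⟩ := hN'
    have hOne : (interior T ∩ Uc).Nonempty :=
      mem_closure_iff_nhds.1 h0Uc _ (interior_mem_nhds.2 hT)
    obtain ⟨z, hz, e, rfl⟩ := Completion.denseRange_coe.inter_open_nonempty
      _ (isOpen_interior.inter hUcopen) hOne
    exact ⟨e, hTN (mem_preimage.2 (interior_subset hz.1)), mem_preimage.2 hz.2⟩
  obtain ⟨u, huV, hulim⟩ := hκ V hVopen 0 h0V
  refine ⟨fun n => ((u n : Completion E)) + x, fun n => huV n, ?_⟩
  have h1 : Tendsto (fun n => ((u n : E) : Completion E)) atTop (𝓝 0) := by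
    have h2 := ((Completion.continuous_coe E).tendsto (0 : E))
    rw [Completion.coe_zero] at h2
    exact h2.comp hulim
  have := h1.add (tendsto_const_nhds (x := x))
  simpa using this

/-- A closed convex balanced set with nonempty interior is a neighborhood of zero;
stated contrapositively via density of the complement. -/
lemma dense_compl_of_not_nhds {X : Type*} [AddCommGroup X] [Module ℝ X]
    [TopologicalSpace X] [IsTopologicalAddGroup X] [ContinuousSMul ℝ X]
    {C : Set X} (hconv : Convex ℝ C) (hbal : Balanced ℝ C)
    (hnot : C ∉ 𝓝 (0 : X)) : Dense Cᶜ := by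
  rw [← interior_eq_empty_iff_dense_compl]
  by_contra h
  obtain ⟨p, hp⟩ := nonempty_iff_ne_empty.2 h
  apply hnot
  have hneg : -p ∈ interior C := by
    have hCneg : (-1 : ℝ) • C = C := by
      apply Subset.antisymm (hbal (-1) (by norm_num))
      intro y hy
      refine ⟨-y, hbal (-1) (by norm_num) ⟨y, hy, by simp⟩, by simp⟩
    have := interior_smul₀ (G₀ := ℝ) (by norm_num : (-1:ℝ) ≠ 0) C
    rw [hCneg] at this
    rw [this]
    exact ⟨p, hp, by simp⟩
  have h0 : (0 : X) ∈ interior C := by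
    have := hconv.interior hp hneg (le_of_lt one_half_pos) (le_of_lt one_half_pos)
      (by norm_num : (1/2 : ℝ) + 1/2 = 1)
    simpa using this
  exact mem_interior_iff_mem_nhds.1 h0

lemma smul_set_mono_of_balanced {X : Type*} [AddCommGroup X] [Module ℝ X]
    {B : Set X} (hbal : Balanced ℝ B) {c₁ c₂ : ℝ} (h1 : 0 < c₁) (h2 : c₁ ≤ c₂) :
    c₁ • B ⊆ c₂ • B := by
  have hc2 : (0:ℝ) < c₂ := lt_of_lt_of_le h1 h2
  intro x hx
  obtain ⟨b, hb, rfl⟩ := hx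
  have hmem : (c₁ / c₂) • b ∈ B := by
    apply hbal (c₁/c₂) _ ⟨b, hb, rfl⟩
    rw [Real.norm_eq_abs, abs_of_pos (div_pos h1 hc2)]
    exact (div_le_one hc2).2 h2
  refine ⟨(c₁/c₂) • b, hmem, ?_⟩
  show c₂ • ((c₁ / c₂) • b) = c₁ • b
  rw [smul_smul, mul_div_cancel₀ _ (ne_of_gt hc2)]

/-- Hahn–Banach separation normalized for balanced sets. -/
lemma separation_functional {X : Type*} [AddCommGroup X] [Module ℝ X]
    [TopologicalSpace X] [IsTopologicalAddGroup X] [ContinuousSMul ℝ X]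
    [LocallyConvexSpace ℝ X]
    {B : Set X} (hconv : Convex ℝ B) (hbal : Balanced ℝ B) (hcl : IsClosed B)
    (h0 : (0 : X) ∈ B) {c : ℝ} (hc : 0 < c) {y : X} (hy : y ∉ c • B) :
    ∃ g : X →L[ℝ] ℝ, (∀ w ∈ B, |g w| ≤ 1) ∧ c < g y := by
  have hCc : Convex ℝ (c • B) := hconv.smul c
  have hCcl : IsClosed (c • B) := hcl.smul_of_ne_zero (ne_of_gt hc)
  obtain ⟨f, u, hfu, huy⟩ := geometric_hahn_banach_closed_point hCc hCcl hy
  have hu0 : 0 < u := by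
    have := hfu 0 ⟨0, h0, by simp⟩
    simpa using this
  refine ⟨(c / u) • f, fun w hw => ?_, ?_⟩
  · have h1 : f (c • w) < u := hfu _ ⟨w, hw, rfl⟩
    have h2 : f (-(c • w)) < u := by
      refine hfu _ ⟨-w, ?_, by simp⟩
      exact hbal (-1) (by norm_num) ⟨w, hw, by simp⟩
    have habs : |f (c • w)| < u := abs_lt.2 ⟨by simpa using neg_lt_of_neg_lt (by simpa using h2), h1⟩
    rw [map_smul] at habs
    have : |c * f w| < u := by simpa [smul_eq_mul] using habs
    have hfw : |f w| < u / c := by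
      rw [abs_mul, abs_of_pos hc] at this
      exact (lt_div_iff₀' hc).2 this
    have : |(c / u) * f w| ≤ 1 := by
      rw [abs_mul, abs_of_pos (div_pos hc hu0)]
      calc (c/u) * |f w| ≤ (c/u) * (u/c) := by
            exact mul_le_mul_of_nonneg_left (le_of_lt hfw) (le_of_lt (div_pos hc hu0))
        _ = 1 := by field_simp
    simpa [smul_eq_mul] using this
  · have : (c / u) * u < (c / u) * f y :=
      mul_lt_mul_of_pos_left huy (div_pos hc hu0)
    have hcu : (c / u) * u = c := by field_simp
    simpa [smul_eq_mul, hcu] using this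

end Infra2


theorem stmt18 {E : Type*} [AddCommGroup E] [Module ℝ E] [UniformSpace E]
    [IsUniformAddGroup E] [ContinuousSMul ℝ E] [LocallyConvexSpace ℝ E]
    (hκ : KappaFrechetUrysohn E)
    (hcomp : ∀ A : ℕ → Set E, Monotone A → (∀ n, IsClosed (A n)) → (∀ n, Convex ℝ (A n)) →
      (∀ n, Balanced ℝ (A n)) → (⋃ n, A n = Set.univ) →
      (⋃ n, closure ((fun x : E => (x : UniformSpace.Completion E)) '' A n)) = Set.univ) :
    ∀ A : ℕ → Set E, Monotone A → (∀ n, IsClosed (A n)) → (∀ n, Convex ℝ (A n)) →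
      (∀ n, Balanced ℝ (A n)) → (⋃ n, A n = Set.univ) → ∃ n, A n ∈ 𝓝 (0 : E) := by
  intro A hAmono hAclosed hAconv hAbal hAcover
  by_contra hno
  push_neg at hno
  classical
  let B : ℕ → Set (Completion E) := fun n =>
    closure ((fun x : E => (x : Completion E)) '' A n)
  have hBclosed : ∀ n, IsClosed (B n) := fun n => isClosed_closure
  have hBconv : ∀ n, Convex ℝ (B n) := fun n => ((hAconv n).linear_image coeL).closure
  have hBbal : ∀ n, Balanced ℝ (B n) := fun n => (balanced_image (hAbal n)).closure
  have hBmono : Monotone B := fun n m h => closure_mono (image_mono (hAmono h))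
  have hBcover : (⋃ n, B n) = univ := hcomp A hAmono hAclosed hAconv hAbal hAcover
  have hBnot : ∀ n, B n ∉ 𝓝 (0 : Completion E) := by
    intro n hn
    apply hno n
    have hpre : A n = (fun x : E => (x : Completion E)) ⁻¹' B n := by
      have h := (Completion.isDenseInducing_coe (α := E)).isInducing.closure_eq_preimage_closure_image (A n)
      rw [← h, (hAclosed n).closure_eq]
    have hcont : ContinuousAt (fun x : E => (x : Completion E)) 0 :=
      (Completion.continuous_coe E).continuousAt
    have h0 : ((fun x : E => (x : Completion E)) 0) = (0 : Completion E) := Completion.coe_zero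
    rw [hpre]
    exact hcont.preimage_mem_nhds (by rw [show ((0:E) : Completion E) = (0 : Completion E) from Completion.coe_zero]; exact hn)
  obtain ⟨n₀, h0n₀⟩ : ∃ n₀, (0 : Completion E) ∈ B n₀ := by
    have : (0 : Completion E) ∈ ⋃ n, B n := by rw [hBcover]; trivial
    exact mem_iUnion.1 this
  have h0B : ∀ {n}, n₀ ≤ n → (0 : Completion E) ∈ B n := fun h => hBmono h h0n₀
  have hcpos : ∀ N : ℕ, (0:ℝ) < 3 * 4 ^ (N+1) := fun N => by positivity
  let C : ℕ → Set (Completion E) := fun N => ((3 * 4 ^ (N+1) : ℝ)) • B N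
  have hCbal : ∀ N, Balanced ℝ (C N) := by
    intro N a ha
    rintro x ⟨w, ⟨b, hb, rfl⟩, rfl⟩
    exact ⟨a • b, hBbal N a ha ⟨b, hb, rfl⟩, (smul_comm _ _ _)⟩
  have hCconv : ∀ N, Convex ℝ (C N) := fun N => (hBconv N).smul _
  have hCmono : Monotone C := by
    intro N M h
    refine (smul_set_mono_of_balanced (hBbal N) (hcpos N) ?_).trans (smul_set_mono (hBmono h))
    have h4 : (4:ℝ)^(N+1) ≤ 4^(M+1) := by
      apply pow_le_pow_right₀ (by norm_num)
      omega
    linarith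
  have hCclosed : ∀ N, IsClosed (C N) := fun N =>
    (hBclosed N).smul_of_ne_zero (ne_of_gt (hcpos N))
  have hCnot : ∀ N, C N ∉ 𝓝 (0 : Completion E) := by
    intro N h
    exact hBnot N ((set_smul_mem_nhds_zero_iff (ne_of_gt (hcpos N))).1 h)
  have hCdense : ∀ N, Dense (C N)ᶜ := fun N =>
    dense_compl_of_not_nhds (hCconv N) (hCbal N) (hCnot N)
  have hκc := kfu_completion hκ
  have hsing : ({(0 : Completion E)} : Set (Completion E)) ∉ 𝓝 (0 : Completion E) := by
    intro h
    exact hBnot n₀ (mem_of_superset h (singleton_subset_iff.2 h0n₀))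
  obtain ⟨p, hpmem, hplim⟩ := hκc {(0 : Completion E)}ᶜ isOpen_compl_singleton 0 (by
    rw [mem_closure_iff_nhds]
    intro N hN
    rcases eq_empty_or_nonempty (N ∩ {(0 : Completion E)}ᶜ) with he | hne
    · exfalso
      apply hsing
      refine mem_of_superset hN ?_
      intro z hz
      by_contra hz0
      exact (eq_empty_iff_forall_notMem.1 he z) ⟨hz, hz0⟩
    · exact hne)
  choose O V hOopen hVopen hpO h0V hdisj using fun i : ℕ => t2_separation (hpmem i)
  let U : Set (Completion E) := ⋃ i, ((C i)ᶜ ∩ O i)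
  have hUopen : IsOpen U := isOpen_iUnion fun i => ((hCclosed i).isOpen_compl).inter (hOopen i)
  have h0U : (0 : Completion E) ∈ closure U := by
    rw [mem_closure_iff_nhds]
    intro N hN
    obtain ⟨i, hpi⟩ : ∃ i, p i ∈ interior N := by
      have hev : ∀ᶠ i in atTop, p i ∈ interior N := hplim (interior_mem_nhds.2 hN)
      exact hev.exists
    have hopen : IsOpen (interior N ∩ O i) := isOpen_interior.inter (hOopen i)
    have hne : (interior N ∩ O i).Nonempty := ⟨p i, hpi, hpO i⟩
    obtain ⟨z, hzo, hzs⟩ := (hCdense i).inter_open_nonempty _ hopen hne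
    exact ⟨z, interior_subset hzo.1, mem_iUnion.2 ⟨i, hzs, hzo.2⟩⟩
  obtain ⟨u, huU, hulim⟩ := hκc U hUopen 0 h0U
  have hesc : ∀ N : ℕ, ∀ᶠ j in atTop, u j ∉ C N := by
    intro N
    have hVmem : (⋂ i ∈ Finset.range (N+1), V i) ∈ 𝓝 (0 : Completion E) :=
      (Filter.biInter_finset_mem _).2 fun i _ => (hVopen i).mem_nhds (h0V i)
    have hev : ∀ᶠ j in atTop, u j ∈ ⋂ i ∈ Finset.range (N+1), V i := hulim hVmem
    filter_upwards [hev] with j hj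
    intro hjC
    obtain ⟨i, hji⟩ := mem_iUnion.1 (huU j)
    rcases lt_or_ge i (N+1) with hiN | hiN
    · have hjV : u j ∈ V i := by
        simp only [mem_iInter] at hj
        exact hj i (Finset.mem_range.2 hiN)
      exact Set.disjoint_left.1 (hdisj i) hji.2 hjV
    · exact hji.1 (hCmono (by omega : N ≤ i) hjC)
  -- step existence for the recursion
  have hstepex : ∀ (l : ℕ) (yh : ℕ → Completion E) (gh : ℕ → (Completion E →L[ℝ] ℝ)),
      ∃ t : ℕ × (Completion E) × (Completion E →L[ℝ] ℝ),
        n₀ ≤ t.1 ∧ l ≤ t.1 ∧ (∀ k, k < l → yh k ∈ B t.1) ∧ (∃ j, t.2.1 = u j) ∧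
        (∀ k, k < l → |gh k t.2.1| ≤ 1) ∧ (∀ w ∈ B t.1, |t.2.2 w| ≤ 1) ∧
        ((3 * 4 ^ (l+1) : ℝ) < t.2.2 t.2.1) := by
    intro l yh gh
    have hm : ∀ k, ∃ mk, yh k ∈ B mk := by
      intro k
      have : yh k ∈ ⋃ n, B n := by rw [hBcover]; trivial
      exact mem_iUnion.1 this
    choose m hmB using hm
    set d : ℕ := max (n₀ + l) ((Finset.range l).sup m) with hd
    have hdn₀ : n₀ ≤ d := le_trans (Nat.le_add_right _ _) (le_max_left _ _)
    have hdl : l ≤ d := le_trans (Nat.le_add_left _ _) (le_max_left _ _)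
    have hyB : ∀ k, k < l → yh k ∈ B d := fun k hk =>
      hBmono (le_trans (Finset.le_sup (Finset.mem_range.2 hk)) (le_max_right _ _)) (hmB k)
    have hev2 : ∀ᶠ j in atTop, ∀ k ∈ Finset.range l, |gh k (u j)| ≤ 1 := by
      rw [eventually_all_finset]
      intro k _
      have htend : Tendsto (fun j => gh k (u j)) atTop (𝓝 0) := by
        have h := ((gh k).continuous.tendsto 0).comp hulim
        rwa [map_zero] at h
      have habs : ∀ᶠ r : ℝ in 𝓝 0, |r| ≤ 1 := by
        filter_upwards [Metric.closedBall_mem_nhds (0:ℝ) one_pos] with r hr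
        simpa [Real.dist_eq] using hr
      exact htend.eventually habs
    obtain ⟨j, hj1, hj2⟩ := ((hesc d).and hev2).exists
    have hesc' : u j ∉ ((3 * 4 ^ (l+1) : ℝ)) • B d := by
      intro hmem
      apply hj1
      refine smul_set_mono_of_balanced (hBbal d) (hcpos l) ?_ hmem
      have h4 : (4:ℝ)^(l+1) ≤ 4^(d+1) := by
        apply pow_le_pow_right₀ (by norm_num)
        omega
      linarith
    obtain ⟨g, hg1, hg2⟩ := separation_functional (hBconv d) (hBbal d) (hBclosed d)
      (h0B hdn₀) (hcpos l) hesc'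
    exact ⟨⟨d, u j, g⟩, hdn₀, hdl, hyB, ⟨j, rfl⟩,
      fun k hk => hj2 k (Finset.mem_range.2 hk), hg1, hg2⟩
  choose step hstep using hstepex
  obtain ⟨hist, histeq⟩ : ∃ hist : ℕ → ℕ → (ℕ × (Completion E) × (Completion E →L[ℝ] ℝ)),
      ∀ l, hist (l+1) = Function.update (hist l) l
        (step l (fun k => (hist l k).2.1) (fun k => (hist l k).2.2)) :=
    ⟨fun l => Nat.rec (fun _ => (0, 0, 0)) (fun l ih => Function.update ih l
      (step l (fun k => (ih k).2.1) (fun k => (ih k).2.2))) l, fun l => rfl⟩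
  set t : ℕ → (ℕ × (Completion E) × (Completion E →L[ℝ] ℝ)) := fun l => hist (l+1) l with htdef
  have hstable : ∀ m k, k < m → hist m k = t k := by
    intro m
    induction m with
    | zero => intro k hk; omega
    | succ m ih =>
      intro k hk
      rcases Nat.lt_succ_iff_lt_or_eq.1 hk with h | h
      · rw [histeq m, Function.update_of_ne (by omega : k ≠ m)]
        exact ih k h
      · subst h; rfl
  set d : ℕ → ℕ := fun l => (t l).1 with hddef
  set y : ℕ → Completion E := fun l => (t l).2.1 with hydef
  set g : ℕ → (Completion E →L[ℝ] ℝ) := fun l => (t l).2.2 with hgdef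
  have hspec : ∀ l, n₀ ≤ d l ∧ l ≤ d l ∧ (∀ k, k < l → y k ∈ B (d l)) ∧ (∃ j, y l = u j) ∧
      (∀ k, k < l → |g k (y l)| ≤ 1) ∧ (∀ w ∈ B (d l), |g l w| ≤ 1) ∧
      ((3 * 4 ^ (l+1) : ℝ) < g l (y l)) := by
    intro l
    have h1 := hstep l (fun k => (hist l k).2.1) (fun k => (hist l k).2.2)
    have h2 : step l (fun k => (hist l k).2.1) (fun k => (hist l k).2.2) = t l := by
      rw [htdef]
      show _ = hist (l+1) l
      rw [histeq l, Function.update_self]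
    rw [h2] at h1
    obtain ⟨a1, a2, a3, a4, a5, a6, a7⟩ := h1
    refine ⟨a1, a2, fun k hk => ?_, a4, fun k hk => ?_, a6, a7⟩
    · have h3 := a3 k hk
      rwa [hstable l k hk] at h3
    · have h5 := a5 k hk
      rwa [hstable l k hk] at h5
  let c : ℕ → ℝ := fun l => ((1:ℝ)/4) ^ (l+1)
  have hcnn : ∀ l, (0:ℝ) ≤ c l := fun l => by positivity
  have hcpos' : ∀ l, (0:ℝ) < c l := fun l => by positivity
  have hsum : ∀ mm : ℕ, ∑ l ∈ Finset.range mm, c l = (1/3) * (1 - (1/4)^mm) := by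
    intro mm
    induction mm with
    | zero => simp
    | succ mm ih =>
      rw [Finset.sum_range_succ, ih]
      show (1/3) * (1 - (1/4)^mm) + ((1:ℝ)/4)^(mm+1) = (1/3) * (1 - (1/4)^(mm+1))
      rw [pow_succ ((1:ℝ)/4) mm]
      ring
  have hsumle : ∀ mm, ∑ l ∈ Finset.range mm, c l ≤ 1/3 := by
    intro mm
    rw [hsum]
    have : (0:ℝ) ≤ (1/4)^mm := by positivity
    nlinarith
  let σ : ℕ → Completion E := fun mm => ∑ l ∈ Finset.range mm, c l • y l
  have hS₀ : IsCompact (insert (0 : Completion E) (Set.range u)) :=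
    hulim.isCompact_insert_range
  have hhull : ∀ mm, σ mm ∈ convexHull ℝ (insert (0 : Completion E) (Set.range u)) := by
    intro mm
    have hconvS : Convex ℝ (convexHull ℝ (insert (0 : Completion E) (Set.range u))) :=
      convex_convexHull _ _
    have heq : ∑ l ∈ Finset.range (mm+1),
        (if l = mm then 1 - ∑ l' ∈ Finset.range mm, c l' else c l) •
        (if l = mm then (0 : Completion E) else y l) = σ mm := by
      rw [Finset.sum_range_succ]
      simp only [eq_self_iff_true, if_true, smul_zero, add_zero]
      apply Finset.sum_congr rfl
      intro l hl
      have hlm : l ≠ mm := Nat.ne_of_lt (Finset.mem_range.1 hl)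
      simp [hlm]
    rw [← heq]
    apply hconvS.sum_mem
    · intro l hl
      by_cases h : l = mm
      · simp only [h, eq_self_iff_true, if_true]
        linarith [hsumle mm]
      · simp only [if_neg h]
        exact hcnn l
    · rw [Finset.sum_range_succ]
      simp only [eq_self_iff_true, if_true]
      rw [Finset.sum_congr rfl (fun l hl => if_neg (Nat.ne_of_lt (Finset.mem_range.1 hl)))]
      ring
    · intro l hl
      by_cases h : l = mm
      · simp only [h, eq_self_iff_true, if_true]
        exact subset_convexHull _ _ (mem_insert _ _)
      · simp only [if_neg h]
        obtain ⟨j, hj⟩ := (hspec l).2.2.2.1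
        exact subset_convexHull _ _ (mem_insert_of_mem _ ⟨j, hj.symm⟩)
  have hK : IsCompact (closure (convexHull ℝ (insert (0 : Completion E) (Set.range u)))) :=
    TotallyBounded.isCompact_of_isClosed
      ((totallyBounded_convexHull.2 hS₀.totallyBounded).closure) isClosed_closure
  obtain ⟨sω, hsωK, hclus⟩ := hK (f := Filter.map σ atTop)
    (le_principal_iff.2 (mem_map.2 (Eventually.of_forall fun mm => subset_closure (hhull mm))))
  have hterm : ∀ i mm, i + 1 ≤ mm → (2:ℝ) ≤ g i (σ mm) := by
    intro i mm him
    have hmap : g i (σ mm) = ∑ l ∈ Finset.range mm, c l * g i (y l) := by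
      rw [map_sum]
      apply Finset.sum_congr rfl
      intro l _
      rw [map_smul, smul_eq_mul]
    have himem : i ∈ Finset.range mm := Finset.mem_range.2 (by omega)
    have hsplit : ∑ l ∈ Finset.range mm, c l * g i (y l) =
        c i * g i (y i) + ∑ l ∈ (Finset.range mm).erase i, c l * g i (y l) :=
      (Finset.add_sum_erase _ _ himem).symm
    have hbound : ∀ l ∈ (Finset.range mm).erase i, |g i (y l)| ≤ 1 := by
      intro l hl
      have hlne : l ≠ i := Finset.ne_of_mem_erase hl
      rcases lt_or_gt_of_ne hlne with h | h
      · -- l < i : y l ∈ B (d i), bound from stage i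
        exact (hspec i).2.2.2.2.2.1 _ ((hspec i).2.2.1 l h)
      · -- i < l : bound from stage l
        exact (hspec l).2.2.2.2.1 i h
    have hrest : -(1/3 : ℝ) ≤ ∑ l ∈ (Finset.range mm).erase i, c l * g i (y l) := by
      have h1 : ∀ l ∈ (Finset.range mm).erase i, -(c l) ≤ c l * g i (y l) := by
        intro l hl
        have h2 := (abs_le.1 (hbound l hl)).1
        nlinarith [hcnn l]
      have h3 : ∑ l ∈ (Finset.range mm).erase i, -(c l) ≤
          ∑ l ∈ (Finset.range mm).erase i, c l * g i (y l) :=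
        Finset.sum_le_sum h1
      have h4 : ∑ l ∈ (Finset.range mm).erase i, c l ≤ ∑ l ∈ Finset.range mm, c l :=
        Finset.sum_le_sum_of_subset_of_nonneg (Finset.erase_subset _ _)
          (fun l _ _ => hcnn l)
      rw [Finset.sum_neg_distrib] at h3
      have := hsumle mm
      linarith
    have hmain : (3:ℝ) < c i * g i (y i) := by
      have h5 := (hspec i).2.2.2.2.2.2
      have h6 : c i * (3 * 4^(i+1)) < c i * g i (y i) :=
        mul_lt_mul_of_pos_left h5 (hcpos' i)
      have h7 : c i * (3 * 4^(i+1)) = 3 := by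
        show ((1:ℝ)/4)^(i+1) * (3 * 4^(i+1)) = 3
        rw [div_pow, one_pow]
        field_simp
      linarith
    rw [hmap, hsplit]
    linarith
  have hsωmem : ∀ i : ℕ, (2:ℝ) ≤ g i sω := by
    intro i
    have h1 : ClusterPt sω (𝓟 (σ '' Ici (i+1))) :=
      hclus.mono (le_principal_iff.2 (image_mem_map (Ici_mem_atTop (i+1))))
    have h2 : sω ∈ closure (σ '' Ici (i+1)) := mem_closure_iff_clusterPt.2 h1
    have h3 : σ '' Ici (i+1) ⊆ {w : Completion E | (2:ℝ) ≤ g i w} := by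
      rintro _ ⟨mm, hmm, rfl⟩
      exact hterm i mm hmm
    have h4 : IsClosed {w : Completion E | (2:ℝ) ≤ g i w} :=
      isClosed_le continuous_const (g i).continuous
    exact (closure_minimal h3 h4) h2
  obtain ⟨N, hN⟩ : ∃ N, sω ∈ B N := by
    have : sω ∈ ⋃ n, B n := by rw [hBcover]; trivial
    exact mem_iUnion.1 this
  have h5 : sω ∈ B (d N) := hBmono (hspec N).2.1 hN
  have h6 : |g N sω| ≤ 1 := (hspec N).2.2.2.2.2.1 sω h5
  have h7 := hsωmem N
  have h8 := abs_le.1 h6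
  linarith [h8.2]
end
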